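/- arXiv:2603.27266 — 5 statements merged into one kernel-verified Lean document; each statement's English description precedes it below -/
import Mathlib

section
/- For every integer r ≥ 1 and every real s > 1, the Newton-type recurrence holds: r·ζ_r(s) = ∑_{j=1}^{r} (−1)^{j−1} ζ_{r−j}(s)·ζ(j s). -/
/-- The Riemann zeta function for real `s > 1`, as the series `∑ n^{-s}`. -/
noncomputable def riemannZetaReal (s : ℝ) : ℝ :=
  ∑' n : ℕ+, (((n : ℕ) : ℝ) ^ s)⁻¹

/-- The multiple zeta function at identical arguments:
`ζ_r(s) = ∑_{n₁ > ⋯ > n_r > 0} (n₁ ⋯ n_r)^{-s}`; by convention `ζ₀(s) = 1`. -/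
noncomputable def multZeta (r : ℕ) (s : ℝ) : ℝ :=
  ∑' f : {f : Fin r → ℕ+ // StrictAnti f}, ∏ i, (((f.1 i : ℕ) : ℝ) ^ s)⁻¹


open Finset

namespace MZaux

noncomputable def x (s : ℝ) (n : ℕ+) : ℝ := (((n : ℕ) : ℝ) ^ s)⁻¹

noncomputable def w (s : ℝ) (A : Finset ℕ+) : ℝ := ∏ n ∈ A, x s n

lemma x_nonneg (s : ℝ) (n : ℕ+) : 0 ≤ x s n := by
  unfold x; positivity

lemma x_le_one {s : ℝ} (hs : 1 < s) (n : ℕ+) : x s n ≤ 1 := by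
  unfold x
  rw [inv_le_one_iff₀]
  right
  exact Real.one_le_rpow (by exact_mod_cast n.one_le) (by linarith)

lemma w_nonneg (s : ℝ) (A : Finset ℕ+) : 0 ≤ w s A :=
  Finset.prod_nonneg fun n _ => x_nonneg s n

lemma summable_x {s : ℝ} (hs : 1 < s) : Summable (x s) :=
  (Real.summable_nat_rpow_inv.mpr hs).comp_injective PNat.coe_injective

lemma summable_xj {s : ℝ} (hs : 1 < s) {j : ℕ} (hj : 1 ≤ j) :
    Summable (fun n => x s n ^ j) := by
  refine (summable_x hs).of_nonneg_of_le (fun n => pow_nonneg (x_nonneg s n) j) (fun n => ?_)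
  exact pow_le_of_le_one (x_nonneg s n) (x_le_one hs n) (by omega)

end MZaux

namespace MZaux

/-- Strictly antitone tuples of length `k` correspond to finsets of card `k`. -/
noncomputable def finsetEquiv (k : ℕ) :
    {A : Finset ℕ+ // A.card = k} ≃ {f : Fin k → ℕ+ // StrictAnti f} where
  toFun A := ⟨fun i => A.1.orderEmbOfFin A.2 i.rev, by
    intro i j hij
    exact (A.1.orderEmbOfFin A.2).strictMono (Fin.rev_lt_rev.mpr hij)⟩
  invFun f := ⟨Finset.image f.1 Finset.univ, by
    rw [Finset.card_image_of_injective _ f.2.injective, card_univ, Fintype.card_fin]⟩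
  left_inv A := by
    apply Subtype.ext
    ext a
    simp only [Finset.mem_image, Finset.mem_univ, true_and]
    constructor
    · rintro ⟨i, rfl⟩
      exact A.1.orderEmbOfFin_mem A.2 i.rev
    · intro ha
      have : a ∈ Set.range (A.1.orderEmbOfFin A.2) := by
        rw [Finset.range_orderEmbOfFin]; exact_mod_cast ha
      obtain ⟨i, hi⟩ := this
      exact ⟨i.rev, by rw [Fin.rev_rev]; exact hi⟩
  right_inv f := by
    apply Subtype.ext
    have hs : StrictMono (fun i : Fin k => f.1 i.rev) := by
      intro i j hij
      exact f.2 (Fin.rev_lt_rev.mpr hij)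
    have hcard : (Finset.image f.1 Finset.univ).card = k := by
      rw [Finset.card_image_of_injective _ f.2.injective, card_univ, Fintype.card_fin]
    have := Finset.orderEmbOfFin_unique (f := fun i : Fin k => f.1 i.rev) hcard
      (fun i => Finset.mem_image_of_mem _ (Finset.mem_univ _)) hs
    funext i
    have := congrFun this.symm i.rev
    simpa [Fin.rev_rev] using this

lemma multZeta_eq (k : ℕ) (s : ℝ) :
    (∑' f : {f : Fin k → ℕ+ // StrictAnti f}, ∏ i, (((f.1 i : ℕ) : ℝ) ^ s)⁻¹)
      = ∑' A : {A : Finset ℕ+ // A.card = k}, w s A.1 := by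
  rw [← (finsetEquiv k).tsum_eq]
  apply tsum_congr
  intro A
  show (∏ i : Fin k, x s (A.1.orderEmbOfFin A.2 i.rev)) = w s A.1
  rw [show (∏ i : Fin k, x s (A.1.orderEmbOfFin A.2 i.rev))
      = ∏ i : Fin k, x s (A.1.orderEmbOfFin A.2 i) from
    Fintype.prod_equiv (Fin.revPerm) _ _ (fun i => rfl)]
  unfold w
  have himg : Finset.image (A.1.orderEmbOfFin A.2) Finset.univ = A.1 := by
    ext a
    simp only [Finset.mem_image, Finset.mem_univ, true_and]
    constructor
    · rintro ⟨i, rfl⟩; exact A.1.orderEmbOfFin_mem A.2 i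
    · intro ha
      have : a ∈ Set.range (A.1.orderEmbOfFin A.2) := by
        rw [Finset.range_orderEmbOfFin]; exact_mod_cast ha
      exact this
  conv_rhs => rw [← himg]
  rw [Finset.prod_image (by
    intro a _ b _ h; exact (A.1.orderEmbOfFin A.2).injective h)]

end MZaux

namespace MZaux

lemma summable_w {s : ℝ} (hs : 1 < s) :
    ∀ k, Summable (fun A : {A : Finset ℕ+ // A.card = k} => w s A.1) := by
  intro k
  induction k with
  | zero =>
      haveI : Finite {A : Finset ℕ+ // A.card = 0} := by
        refine Finite.of_injective (fun _ => (0 : Fin 1)) ?_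
        intro A B _
        apply Subtype.ext
        rw [Finset.card_eq_zero.mp A.2, Finset.card_eq_zero.mp B.2]
      exact Summable.of_finite
  | succ k ih =>
      have hpair : Summable (fun p : {A : Finset ℕ+ // A.card = k} × ℕ+ =>
          w s p.1.1 * x s p.2) :=
        ih.mul_of_nonneg (summable_x hs) (fun A => w_nonneg s A.1) (x_nonneg s)
      have hne : ∀ A : {A : Finset ℕ+ // A.card = k + 1}, A.1.Nonempty :=
        fun A => Finset.card_pos.mp (by rw [A.2]; omega)
      set σ : {A : Finset ℕ+ // A.card = k + 1} → {A : Finset ℕ+ // A.card = k} × ℕ+ :=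
        fun A => (⟨A.1.erase (A.1.min' (hne A)), by
          rw [Finset.card_erase_of_mem (A.1.min'_mem (hne A)), A.2]; omega⟩, A.1.min' (hne A)) with hσ
      have hinj : Function.Injective σ := by
        intro A B h
        have h2 : A.1.min' (hne A) = B.1.min' (hne B) := congrArg Prod.snd h
        have h1 : A.1.erase (A.1.min' (hne A)) = B.1.erase (B.1.min' (hne B)) :=
          congrArg (fun p => (Prod.fst p).1) h
        apply Subtype.ext
        rw [← Finset.insert_erase (A.1.min'_mem (hne A)),
            ← Finset.insert_erase (B.1.min'_mem (hne B)), h1, h2]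
      refine ((hpair.comp_injective hinj).congr ?_)
      intro A
      show w s (A.1.erase (A.1.min' (hne A))) * x s (A.1.min' (hne A)) = w s A.1
      exact Finset.prod_erase_mul _ _ (A.1.min'_mem (hne A))

end MZaux

namespace MZaux

noncomputable def eF (s : ℝ) (k : ℕ) : ℝ := ∑' A : {A : Finset ℕ+ // A.card = k}, w s A.1
noncomputable def pS (s : ℝ) (j : ℕ) : ℝ := ∑' n : ℕ+, x s n ^ j

def memSet (k : ℕ) : Set ({A : Finset ℕ+ // A.card = k} × ℕ+) := {p | p.2 ∈ p.1.1}

noncomputable def Mp (s : ℝ) (j k : ℕ) : ℝ :=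
  ∑' p : memSet k, w s p.1.1.1 * x s p.1.2 ^ j
noncomputable def Np (s : ℝ) (j k : ℕ) : ℝ :=
  ∑' p : ↥(memSet k)ᶜ, w s p.1.1.1 * x s p.1.2 ^ j

lemma split_lemma {s : ℝ} (hs : 1 < s) {j : ℕ} (hj : 1 ≤ j) (k : ℕ) :
    eF s k * pS s j = Np s j k + Mp s j k := by
  have hW : Summable (fun p : {A : Finset ℕ+ // A.card = k} × ℕ+ =>
      w s p.1.1 * x s p.2 ^ j) :=
    (summable_w hs k).mul_of_nonneg (summable_xj hs hj)
      (fun A => w_nonneg s A.1) (fun n => pow_nonneg (x_nonneg s n) j)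
  have h1 : eF s k * pS s j = ∑' p : {A : Finset ℕ+ // A.card = k} × ℕ+,
      w s p.1.1 * x s p.2 ^ j := by
    refine tsum_mul_tsum_of_summable_norm ?_ ?_
    · exact ((summable_w hs k).congr
        (fun A => (Real.norm_of_nonneg (w_nonneg s A.1)).symm))
    · exact ((summable_xj hs hj).congr
        (fun n => (Real.norm_of_nonneg (pow_nonneg (x_nonneg s n) j)).symm))
  rw [h1, ← hW.tsum_subtype_add_tsum_subtype_compl (memSet k), add_comm]
  rfl

def stepEquiv (k : ℕ) : ↥(memSet (k+1)) ≃ ↥(memSet k)ᶜ where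
  toFun p := ⟨(⟨p.1.1.1.erase p.1.2, by
      rw [Finset.card_erase_of_mem p.2, p.1.1.2]; omega⟩, p.1.2),
    fun h => Finset.notMem_erase _ _ h⟩
  invFun q := ⟨(⟨insert q.1.2 q.1.1.1, by
      rw [Finset.card_insert_of_notMem q.2, q.1.1.2]⟩, q.1.2),
    Finset.mem_insert_self _ _⟩
  left_inv p := by
    apply Subtype.ext
    apply Prod.ext
    · exact Subtype.ext (Finset.insert_erase p.2)
    · rfl
  right_inv q := by
    apply Subtype.ext
    apply Prod.ext
    · exact Subtype.ext (Finset.erase_insert q.2)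
    · rfl

lemma step_lemma (s : ℝ) (j k : ℕ) : Mp s j (k+1) = Np s (j+1) k := by
  rw [Mp, Np, ← (stepEquiv k).tsum_eq]
  apply tsum_congr
  intro p
  show w s p.1.1.1 * x s p.1.2 ^ j = w s (p.1.1.1.erase p.1.2) * x s p.1.2 ^ (j+1)
  simp only [w]
  rw [← Finset.prod_erase_mul p.1.1.1 (x s) p.2, pow_succ]
  ring

lemma Mp_zero_card (s : ℝ) (j : ℕ) : Mp s j 0 = 0 := by
  haveI : IsEmpty ↥(memSet 0) := by
    refine ⟨fun p => ?_⟩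
    have h : p.1.2 ∈ p.1.1.1 := p.2
    rw [Finset.card_eq_zero.mp p.1.1.2] at h
    exact absurd h (Finset.notMem_empty _)
  exact tsum_empty

lemma Mp_count {s : ℝ} (hs : 1 < s) (k : ℕ) : Mp s 0 k = (k : ℝ) * eF s k := by
  have hinner : ∀ A : {A : Finset ℕ+ // A.card = k},
      ∑' _ : {n : ℕ+ // n ∈ A.1}, w s A.1 = (k : ℝ) * w s A.1 := by
    intro A
    rw [tsum_fintype, Finset.sum_const, Finset.card_univ, Fintype.card_coe,
      nsmul_eq_mul, A.2]
  have hsum : Summable (fun q : Σ A : {A : Finset ℕ+ // A.card = k},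
      {n : ℕ+ // n ∈ A.1} => w s q.1.1) := by
    refine (summable_sigma_of_nonneg (f := fun q : Σ A : {A : Finset ℕ+ // A.card = k},
      {n : ℕ+ // n ∈ A.1} => w s q.1.1) (fun q => w_nonneg s q.1.1)).mpr ?_
    constructor
    · intro A; exact Summable.of_finite
    · exact ((summable_w hs k).mul_left (k : ℝ)).congr
        (fun A => (hinner A).symm)
  calc Mp s 0 k = ∑' p : memSet k, w s p.1.1.1 := by
        apply tsum_congr; intro p; rw [pow_zero, mul_one]
    _ = ∑' q : Σ A : {A : Finset ℕ+ // A.card = k}, {n : ℕ+ // n ∈ A.1}, w s q.1.1 := by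
        exact Equiv.tsum_eq (Equiv.subtypeProdEquivSigmaSubtype
          (fun (A : {A : Finset ℕ+ // A.card = k}) (n : ℕ+) => n ∈ A.1))
          (fun q => w s q.1.1)
    _ = ∑' A : {A : Finset ℕ+ // A.card = k},
          ∑' _ : {n : ℕ+ // n ∈ A.1}, w s A.1 := hsum.tsum_sigma
    _ = ∑' A : {A : Finset ℕ+ // A.card = k}, (k : ℝ) * w s A.1 :=
        tsum_congr hinner
    _ = (k : ℝ) * eF s k := tsum_mul_left

end MZaux


namespace MZaux

lemma pS_eq (s : ℝ) (j : ℕ) :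
    (∑' n : ℕ+, (((n : ℕ) : ℝ) ^ ((j : ℝ) * s))⁻¹) = pS s j := by
  apply tsum_congr
  intro n
  show (((n : ℕ) : ℝ) ^ ((j : ℝ) * s))⁻¹ = x s n ^ j
  unfold x
  rw [inv_pow, mul_comm, Real.rpow_mul (by positivity), Real.rpow_natCast]

end MZaux

/-- For `r ≥ 1` and real `s > 1`:
`r·ζ_r(s) = ∑_{j=1}^{r} (−1)^{j−1} ζ_{r−j}(s)·ζ(js)`. -/
theorem multZeta_recurrence (r : ℕ) (hr : 1 ≤ r) (s : ℝ) (hs : 1 < s) :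
    (r : ℝ) * multZeta r s =
      ∑ j ∈ Finset.Icc 1 r,
        (-1 : ℝ) ^ (j - 1) * multZeta (r - j) s * riemannZetaReal ((j : ℝ) * s) := by
  obtain ⟨m, rfl⟩ : ∃ m, r = m + 1 := ⟨r - 1, by omega⟩
  have hMZ : ∀ k, multZeta k s = MZaux.eF s k := by
    intro k; unfold multZeta; exact MZaux.multZeta_eq k s
  have hRZ : ∀ j : ℕ, riemannZetaReal ((j : ℝ) * s) = MZaux.pS s j := by
    intro j; unfold riemannZetaReal; exact MZaux.pS_eq s j
  set G : ℕ → ℝ := fun i =>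
    if i + 1 ≤ m + 1 then (-1:ℝ)^i * MZaux.Np s (i+1) (m + 1 - (i+1)) else 0 with hG
  have key : ∀ i ∈ Finset.range (m+1),
      (-1 : ℝ) ^ (1 + i - 1) * multZeta (m + 1 - (1+i)) s
        * riemannZetaReal (((1+i : ℕ) : ℝ) * s) = G i - G (i+1) := by
    intro i hi
    rw [Finset.mem_range] at hi
    rw [show 1 + i = i + 1 from by omega, show i + 1 - 1 = i from by omega,
      hMZ, hRZ, mul_assoc, MZaux.split_lemma hs (by omega) (m + 1 - (i+1))]
    by_cases hir : i + 1 < m + 1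
    · have hstep : MZaux.Mp s (i+1) (m+1-(i+1)) = MZaux.Np s (i+1+1) (m+1-(i+1+1)) := by
        rw [show m+1-(i+1) = (m+1-(i+1+1))+1 from by omega]
        exact MZaux.step_lemma s (i+1) (m+1-(i+1+1))
      rw [hstep]
      simp only [hG]
      rw [if_pos (by omega), if_pos (by omega), pow_succ]
      ring
    · have h0 : m + 1 - (i+1) = 0 := by omega
      rw [h0, MZaux.Mp_zero_card]
      simp only [hG]
      rw [if_pos (by omega), if_neg (by omega), h0]
      ring
  rw [← Finset.Ico_add_one_right_eq_Icc, Finset.sum_Ico_eq_sum_range,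
    show m + 1 + 1 - 1 = m + 1 from by omega,
    Finset.sum_congr rfl key, Finset.sum_range_sub' G (m+1)]
  have hGr : G (m+1) = 0 := by simp only [hG]; rw [if_neg (by omega)]
  have hG0 : G 0 = ((m+1 : ℕ) : ℝ) * multZeta (m+1) s := by
    simp only [hG]
    rw [if_pos (by omega), pow_zero, one_mul,
      show m + 1 - (0+1) = m from by omega,
      ← MZaux.step_lemma s 0 m, MZaux.Mp_count hs, ← hMZ]
  rw [hGr, sub_zero, hG0]
end

section
/- For every integer r ≥ 1 and every real s > 1, the Newton-type recurrence holds: r·t_r(s) = ∑_{j=1}^{r} (−1)^{j−1} t_{r−j}(s)·t(j s). -/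
set_option maxHeartbeats 1000000

open Finset Filter Topology MvPolynomial

/-- The `t`-function for real `s > 1`: `t(s) = ∑_{n≥1} (2n−1)^{-s}`. -/
noncomputable def tFun (s : ℝ) : ℝ :=
  ∑' n : ℕ+, (((2 * (n : ℕ) - 1 : ℕ) : ℝ) ^ s)⁻¹

/-- The multiple `t`-function at identical arguments:
`t_r(s) = ∑_{n₁ > ⋯ > n_r > 0} ((2n₁−1)⋯(2n_r−1))^{-s}`; by convention `t₀(s) = 1`. -/
noncomputable def multT (r : ℕ) (s : ℝ) : ℝ :=
  ∑' f : {f : Fin r → ℕ+ // StrictAnti f},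
    ∏ i, (((2 * (f.1 i : ℕ) - 1 : ℕ) : ℝ) ^ s)⁻¹

noncomputable def xf (s : ℝ) (n : ℕ+) : ℝ := (((2 * (n : ℕ) - 1 : ℕ) : ℝ) ^ s)⁻¹





lemma xf_nonneg (s : ℝ) (n : ℕ+) : 0 ≤ xf s n := by
  unfold xf
  positivity

lemma one_le_base (n : ℕ+) : (1 : ℝ) ≤ ((2 * (n : ℕ) - 1 : ℕ) : ℝ) := by
  have h : 0 < (n:ℕ) := n.pos
  have : (1 : ℕ) ≤ 2 * (n : ℕ) - 1 := by omega
  exact_mod_cast this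

lemma xf_le_one {s : ℝ} (hs : 0 < s) (n : ℕ+) : xf s n ≤ 1 := by
  unfold xf
  rw [inv_le_one_iff₀]
  right
  exact Real.one_le_rpow (one_le_base n) hs.le

lemma summable_xf {s : ℝ} (hs : 1 < s) : Summable (xf s) := by
  have h0 : Summable (fun n : ℕ => ((n : ℝ) ^ s)⁻¹) := Real.summable_nat_rpow_inv.mpr hs
  have h1 : Summable (fun n : ℕ+ => (((n : ℕ) : ℝ) ^ s)⁻¹) :=
    h0.comp_injective (fun a b h => PNat.coe_injective h)
  refine h1.of_nonneg_of_le (fun n => xf_nonneg s n) (fun n => ?_)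
  unfold xf
  apply inv_anti₀
  · positivity
  · apply Real.rpow_le_rpow (by positivity) ?_ (by linarith)
    have h : 0 < (n:ℕ) := n.pos
    have : (n : ℕ) ≤ 2 * (n : ℕ) - 1 := by omega
    exact_mod_cast this

lemma summable_xf_pow {s : ℝ} (hs : 1 < s) {j : ℕ} (hj : 1 ≤ j) :
    Summable (fun n : ℕ+ => xf s n ^ j) := by
  refine (summable_xf hs).of_nonneg_of_le (fun n => pow_nonneg (xf_nonneg s n) j) (fun n => ?_)
  calc xf s n ^ j ≤ xf s n ^ 1 :=
        pow_le_pow_of_le_one (xf_nonneg s n) (xf_le_one (by linarith) n) hj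
    _ = xf s n := pow_one _

lemma tFun_eq {s : ℝ} (hs : 0 < s) (j : ℕ) :
    tFun ((j : ℝ) * s) = ∑' n : ℕ+, xf s n ^ j := by
  unfold tFun xf
  congr 1
  funext n
  rw [inv_pow, mul_comm (j:ℝ) s, Real.rpow_mul (by positivity), Real.rpow_natCast]


lemma summable_pi {s : ℝ} (hs : 1 < s) (r : ℕ) :
    Summable (fun f : Fin r → ℕ+ => ∏ i, xf s (f i)) := by
  induction r with
  | zero => simpa using summable_of_finite_support (Set.toFinite _)
  | succ r ih =>
      have h2 : Summable (fun p : ℕ+ × (Fin r → ℕ+) => xf s p.1 * ∏ i, xf s (p.2 i)) := by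
        apply Summable.mul_of_nonneg (summable_xf hs) ih (fun n => xf_nonneg s n)
          (fun f => Finset.prod_nonneg fun i _ => xf_nonneg s _)
      have h3 : Summable (fun p : ℕ+ × (Fin r → ℕ+) =>
          (fun f : Fin (r+1) → ℕ+ => ∏ i, xf s (f i)) ((Fin.consEquiv (fun _ => ℕ+)) p)) := by
        refine h2.congr fun p => ?_
        simp [Fin.prod_univ_succ]
      exact (Equiv.summable_iff _).mp h3

/-- equiv between r-subsets and strictly antitone tuples -/
def subsetEquiv (r : ℕ) : {A : Finset ℕ+ // A.card = r} ≃ {f : Fin r → ℕ+ // StrictAnti f} where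
  toFun A := ⟨fun i => A.1.orderEmbOfFin A.2 i.rev,
    fun i j hij => (A.1.orderEmbOfFin A.2).strictMono (by
      simpa using Fin.rev_lt_rev.mpr hij)⟩
  invFun f := ⟨Finset.image f.1 univ, by
    rw [Finset.card_image_of_injective _ f.2.injective, card_univ, Fintype.card_fin]⟩
  left_inv A := by
    apply Subtype.ext
    show Finset.image (fun i : Fin r => A.1.orderEmbOfFin A.2 i.rev) univ = A.1
    have : (fun i : Fin r => A.1.orderEmbOfFin A.2 i.rev) = (A.1.orderEmbOfFin A.2) ∘ Fin.rev :=
      rfl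
    rw [this, ← Finset.image_image]
    have h1 : Finset.image Fin.rev (univ : Finset (Fin r)) = univ :=
      Finset.image_univ_of_surjective Fin.rev_surjective
    rw [h1]
    apply Finset.coe_injective
    rw [Finset.coe_image, Finset.coe_univ, Set.image_univ, Finset.range_orderEmbOfFin]
  right_inv f := by
    apply Subtype.ext
    funext i
    have hmono : StrictMono (fun i : Fin r => f.1 i.rev) :=
      fun a b hab => f.2 (Fin.rev_lt_rev.mpr hab)
    have hcard : (Finset.image f.1 univ).card = r := by
      rw [Finset.card_image_of_injective _ f.2.injective, card_univ, Fintype.card_fin]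
    have huniq := Finset.orderEmbOfFin_unique (f := fun i : Fin r => f.1 i.rev)
      hcard (fun x => Finset.mem_image_of_mem _ (Finset.mem_univ _)) hmono
    show (Finset.image f.1 univ).orderEmbOfFin _ i.rev = f.1 i
    rw [← congrFun huniq i.rev, Fin.rev_rev]

lemma subsetEquiv_apply (r : ℕ) (A : {A : Finset ℕ+ // A.card = r}) :
    ((subsetEquiv r) A).1 = fun i => A.1.orderEmbOfFin A.2 i.rev := rfl





lemma summable_subtype {s : ℝ} (hs : 1 < s) (r : ℕ) :
    Summable (fun f : {f : Fin r → ℕ+ // StrictAnti f} => ∏ i, xf s (f.1 i)) :=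
  (summable_pi hs r).subtype _

lemma prod_orderEmb (s : ℝ) {r : ℕ} (A : {A : Finset ℕ+ // A.card = r}) :
    ∏ i : Fin r, xf s (A.1.orderEmbOfFin A.2 i.rev) = ∏ n ∈ A.1, xf s n := by
  have h1 : ∏ i : Fin r, xf s (A.1.orderEmbOfFin A.2 i.rev)
      = ∏ i : Fin r, xf s (A.1.orderEmbOfFin A.2 i) :=
    Fintype.prod_equiv (Fin.revPerm) _ _ (fun i => rfl)
  have himg : Finset.image (A.1.orderEmbOfFin A.2) univ = A.1 := by
    apply Finset.coe_injective
    rw [Finset.coe_image, Finset.coe_univ, Set.image_univ, Finset.range_orderEmbOfFin]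
  rw [h1]
  conv_rhs => rw [← himg]
  rw [Finset.prod_image (fun a _ b _ h => (A.1.orderEmbOfFin A.2).injective h)]

lemma hasSum_multT {s : ℝ} (hs : 1 < s) (r : ℕ) :
    HasSum (fun A : {A : Finset ℕ+ // A.card = r} => ∏ n ∈ A.1, xf s n) (multT r s) := by
  have h0 : HasSum (fun f : {f : Fin r → ℕ+ // StrictAnti f} => ∏ i, xf s (f.1 i))
      (multT r s) := (summable_subtype hs r).hasSum
  have h1 := (Equiv.hasSum_iff (subsetEquiv r)).mpr h0
  refine h1.congr_fun fun A => ?_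
  show ∏ n ∈ A.1, xf s n = ∏ i, xf s (((subsetEquiv r) A).1 i)
  rw [subsetEquiv_apply, ← prod_orderEmb s A]

lemma tendsto_E {s : ℝ} (hs : 1 < s) (r : ℕ) :
    Tendsto (fun S : Finset ℕ+ => ∑ A ∈ S.powersetCard r, ∏ n ∈ A, xf s n) atTop
      (𝓝 (multT r s)) := by
  have h := hasSum_multT hs r
  have hu : Tendsto (fun S : Finset ℕ+ =>
      (S.powersetCard r).subtype (fun A => A.card = r)) atTop atTop := by
    apply tendsto_atTop_atTop_of_monotone
    · intro S S' hss A hA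
      simp only [Finset.mem_subtype, Finset.mem_powersetCard] at *
      exact ⟨hA.1.trans hss, hA.2⟩
    · intro t
      refine ⟨t.sup (fun A => A.1), fun A hA => ?_⟩
      simp only [Finset.mem_subtype, Finset.mem_powersetCard]
      exact ⟨Finset.le_sup hA, A.2⟩
  have h2 := h.comp hu
  refine h2.congr fun S => ?_
  show (∑ A ∈ (S.powersetCard r).subtype (fun A => A.card = r),
      ∏ n ∈ (A : Finset ℕ+), xf s n) = ∑ A ∈ S.powersetCard r, ∏ n ∈ A, xf s n
  exact Finset.sum_subtype_of_mem (fun B : Finset ℕ+ => ∏ n ∈ B, xf s n) (fun A hA => (Finset.mem_powersetCard.mp hA).2)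

lemma tendsto_P {s : ℝ} (hs : 1 < s) {j : ℕ} (hj : 1 ≤ j) :
    Tendsto (fun S : Finset ℕ+ => ∑ n ∈ S, xf s n ^ j) atTop (𝓝 (tFun ((j : ℝ) * s))) := by
  rw [tFun_eq (by linarith) j]
  exact (summable_xf_pow hs hj).hasSum



lemma aeval_esymm (s : ℝ) (S : Finset ℕ+) (m : ℕ) :
    MvPolynomial.aeval (fun i : {x // x ∈ S} => xf s i.1) (esymm {x // x ∈ S} ℝ m)
      = ∑ A ∈ S.powersetCard m, ∏ n ∈ A, xf s n := by
  rw [esymm, map_sum]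
  simp only [map_prod, aeval_X]
  refine Finset.sum_nbij' (fun t => t.map (Function.Embedding.subtype _))
    (fun A => A.subtype (· ∈ S)) ?_ ?_ ?_ ?_ ?_
  · intro t ht
    rw [Finset.mem_powersetCard]
    constructor
    · intro n hn
      rcases Finset.mem_map.mp hn with ⟨i, _, rfl⟩
      exact i.2
    · rw [Finset.card_map]
      exact (Finset.mem_powersetCard_univ.mp ht)
  · intro A hA
    rw [Finset.mem_powersetCard_univ, Finset.card_subtype,
      Finset.filter_true_of_mem (fun n hn => (Finset.mem_powersetCard.mp hA).1 hn)]
    exact (Finset.mem_powersetCard.mp hA).2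
  · intro t _
    ext ⟨a, ha⟩
    simp only [Finset.mem_subtype, Finset.mem_map, Function.Embedding.coe_subtype]
    constructor
    · rintro ⟨⟨b, hb⟩, hbt, rfl⟩
      exact hbt
    · intro h
      exact ⟨⟨a, ha⟩, h, rfl⟩
  · intro A hA
    show (A.subtype (· ∈ S)).map (Function.Embedding.subtype _) = A
    rw [Finset.subtype_map,
      Finset.filter_true_of_mem (fun n hn => (Finset.mem_powersetCard.mp hA).1 hn)]
  · intro t _
    rw [Finset.prod_map]
    rfl

lemma aeval_psum (s : ℝ) (S : Finset ℕ+) (j : ℕ) :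
    MvPolynomial.aeval (fun i : {x // x ∈ S} => xf s i.1) (psum {x // x ∈ S} ℝ j)
      = ∑ n ∈ S, xf s n ^ j := by
  rw [psum, map_sum]
  simp only [map_pow, aeval_X]
  exact Finset.sum_coe_sort S (fun n => xf s n ^ j)

lemma sign_eq {r j : ℕ} (hj1 : 1 ≤ j) (hjr : j ≤ r) :
    (-1 : ℝ) ^ (r + 1) * (-1) ^ (r - j) = (-1) ^ (j - 1) := by
  rw [← pow_add]
  have hexp : r + 1 + (r - j) = (j - 1) + 2 * (r - j + 1) := by omega
  rw [hexp, pow_add, pow_mul, neg_one_sq, one_pow, mul_one]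

lemma finNewton (s : ℝ) (S : Finset ℕ+) (r : ℕ) (hr : 1 ≤ r) :
    (r : ℝ) * ∑ A ∈ S.powersetCard r, ∏ n ∈ A, xf s n =
      ∑ j ∈ Finset.Icc 1 r, (-1 : ℝ) ^ (j - 1) *
        (∑ A ∈ S.powersetCard (r - j), ∏ n ∈ A, xf s n) * (∑ n ∈ S, xf s n ^ j) := by
  classical
  have h := congrArg (MvPolynomial.aeval (fun i : {x // x ∈ S} => xf s i.1))
    (MvPolynomial.mul_esymm_eq_sum {x // x ∈ S} ℝ r)
  simp only [map_mul, map_natCast, map_pow, map_neg, map_one, map_sum, aeval_esymm,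
    aeval_psum] at h
  rw [h, Finset.mul_sum]
  refine Finset.sum_nbij' (fun a => a.2) (fun j => (r - j, j)) ?_ ?_ ?_ ?_ ?_
  · intro a ha
    rw [Finset.mem_filter, Finset.HasAntidiagonal.mem_antidiagonal] at ha
    show a.2 ∈ Finset.Icc 1 r
    rw [Finset.mem_Icc]
    omega
  · intro j hj
    rw [Finset.mem_Icc] at hj
    rw [Finset.mem_filter, Finset.HasAntidiagonal.mem_antidiagonal]
    refine ⟨?_, ?_⟩
    · show r - j + j = r
      omega
    · show r - j < r
      omega
  · intro a ha
    rw [Finset.mem_filter, Finset.HasAntidiagonal.mem_antidiagonal] at ha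
    show (r - a.2, a.2) = a
    have h1 : r - a.2 = a.1 := by omega
    rw [h1]
  · intro j hj
    rfl
  · intro a ha
    rw [Finset.mem_filter, Finset.HasAntidiagonal.mem_antidiagonal] at ha
    have h1 : 1 ≤ a.2 := by omega
    have h2 : a.2 ≤ r := by omega
    have ha1 : a.1 = r - a.2 := by omega
    beta_reduce
    rw [ha1, ← sign_eq h1 h2]
    ring

/-- For `r ≥ 1` and real `s > 1`:
`r·t_r(s) = ∑_{j=1}^{r} (−1)^{j−1} t_{r−j}(s)·t(js)`. -/
theorem multT_recurrence (r : ℕ) (hr : 1 ≤ r) (s : ℝ) (hs : 1 < s) :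
    (r : ℝ) * multT r s =
      ∑ j ∈ Finset.Icc 1 r,
        (-1 : ℝ) ^ (j - 1) * multT (r - j) s * tFun ((j : ℝ) * s) := by
  have hL : Tendsto (fun S : Finset ℕ+ =>
      (r : ℝ) * ∑ A ∈ S.powersetCard r, ∏ n ∈ A, xf s n) atTop (𝓝 ((r : ℝ) * multT r s)) :=
    (tendsto_E hs r).const_mul _
  have hR : Tendsto (fun S : Finset ℕ+ => ∑ j ∈ Finset.Icc 1 r,
      (-1 : ℝ) ^ (j - 1) * (∑ A ∈ S.powersetCard (r - j), ∏ n ∈ A, xf s n) *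
        ∑ n ∈ S, xf s n ^ j) atTop
      (𝓝 (∑ j ∈ Finset.Icc 1 r, (-1 : ℝ) ^ (j - 1) * multT (r - j) s * tFun ((j : ℝ) * s))) := by
    apply tendsto_finset_sum
    intro j hj
    have hj1 : 1 ≤ j := (Finset.mem_Icc.mp hj).1
    exact ((tendsto_E hs (r - j)).const_mul ((-1 : ℝ) ^ (j - 1))).mul (tendsto_P hs hj1)
  have hL2 := hL.congr (fun S => finNewton s S r hr)
  exact tendsto_nhds_unique hL2 hR
end

section
/- For every integer r ≥ 1 and every real s > 1, the Newton-type recurrence holds: r·t_r⋆(s) = ∑_{j=1}^{r} t_{r−j}⋆(s)·t(j s). -/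
/-- The multiple `t`-star function at identical arguments:
`t_r⋆(s) = ∑_{n₁ ≥ ⋯ ≥ n_r ≥ 1} ((2n₁−1)⋯(2n_r−1))^{-s}`; by convention `t₀⋆(s) = 1`. -/
noncomputable def multTStar (r : ℕ) (s : ℝ) : ℝ :=
  ∑' f : {f : Fin r → ℕ+ // Antitone f},
    ∏ i, (((2 * (f.1 i : ℕ) - 1 : ℕ) : ℝ) ^ s)⁻¹

namespace MultTStarAux

open Finset
open scoped ENNReal

/-! ### The equivalence between antitone tuples and multisets of fixed size -/

variable {α : Type*} [LinearOrder α]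

lemma sort_map_eq_ofFn {r : ℕ} (f : Fin r → α) (hf : Antitone f) :
    Multiset.sort (Multiset.map f Finset.univ.val) (· ≥ ·) = List.ofFn f := by
  apply List.Perm.eq_of_pairwise' (r := (· ≥ ·))
  rotate_right
  · rw [← Multiset.coe_eq_coe, Multiset.sort_eq, Fin.univ_val_map]
  · exact Multiset.pairwise_sort _ _
  · rw [List.pairwise_ofFn]
    intro i j h
    exact hf h.le

lemma length_sort' {r : ℕ} (m : Sym α r) : r = (Multiset.sort m.1 (· ≥ ·)).length := by
  simp [m.2]

noncomputable def symInvFun {r : ℕ} (m : Sym α r) : Fin r → α :=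
  fun i => (m.1.sort (· ≥ ·)).get (Fin.cast (length_sort' m) i)

lemma symInvFun_antitone {r : ℕ} (m : Sym α r) : Antitone (symInvFun m) := by
  intro i j hij
  exact (Multiset.pairwise_sort m.1 (· ≥ ·)).rel_get_of_le (by exact hij)

lemma ofFn_symInvFun {r : ℕ} (m : Sym α r) :
    List.ofFn (symInvFun m) = m.1.sort (· ≥ ·) := by
  apply List.ext_getElem (by simp [m.2])
  intro k h1 h2
  simp [symInvFun]
  rfl

/-- Antitone tuples of length `r` valued in a linear order correspond to multisets of
cardinality `r`. -/
noncomputable def symEquiv (r : ℕ) : {f : Fin r → α // Antitone f} ≃ Sym α r where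
  toFun f := ⟨Multiset.map f.1 Finset.univ.val, by simp⟩
  invFun m := ⟨symInvFun m, symInvFun_antitone m⟩
  left_inv f := by
    apply Subtype.ext
    funext i
    have h1 : Multiset.sort (Multiset.map f.1 Finset.univ.val) (· ≥ ·) = List.ofFn f.1 :=
      sort_map_eq_ofFn f.1 f.2
    simp only [symInvFun]
    rw [List.get_of_eq h1]
    simp
  right_inv m := by
    apply Subtype.ext
    show Multiset.map (symInvFun m) Finset.univ.val = m.1
    rw [Fin.univ_val_map, ofFn_symInvFun, Multiset.sort_eq]

/-! ### The `ℝ≥0∞`-valued versions of the sums -/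

/-- The summand. -/
noncomputable def Xe (s : ℝ) (v : ℕ+) : ℝ≥0∞ :=
  ENNReal.ofReal (((2 * (v : ℕ) - 1 : ℕ) : ℝ) ^ s)⁻¹

/-- Weight of a multiset. -/
noncomputable def We (s : ℝ) (m : Multiset ℕ+) : ℝ≥0∞ := (m.map (Xe s)).prod

noncomputable def Te (r : ℕ) (s : ℝ) : ℝ≥0∞ := ∑' m : Sym ℕ+ r, We s m.1

noncomputable def Pe (j : ℕ) (s : ℝ) : ℝ≥0∞ := ∑' v : ℕ+, Xe s v ^ j

lemma We_map {r : ℕ} (s : ℝ) (g : Fin r → ℕ+) :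
    We s (Multiset.map g Finset.univ.val) = ∏ i, Xe s (g i) := by
  rw [We, Multiset.map_map]
  rfl

lemma Te_eq_tuple (r : ℕ) (s : ℝ) :
    Te r s = ∑' f : {f : Fin r → ℕ+ // Antitone f}, ∏ i, Xe s (f.1 i) := by
  rw [Te, ← Equiv.tsum_eq (symEquiv r) (fun m => We s m.1)]
  exact tsum_congr fun f => We_map s f.1

/-! ### Newton-type recurrence in `ℝ≥0∞` -/

def addRepEquiv (r j : ℕ) (hjr : j ≤ r) (v : ℕ+) :
    Sym ℕ+ (r - j) ≃ {m : Sym ℕ+ r // j ≤ m.1.count v} where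
  toFun μ := ⟨⟨μ.1 + Multiset.replicate j v, by
      simp [μ.2, Nat.sub_add_cancel hjr]⟩, by simp⟩
  invFun m := ⟨m.1.1 - Multiset.replicate j v, by
    have hle : Multiset.replicate j v ≤ m.1.1 := Multiset.le_count_iff_replicate_le.mp m.2
    rw [Multiset.card_sub hle]
    simp [m.1.2]⟩
  left_inv μ := by
    apply Subtype.ext
    show μ.1 + Multiset.replicate j v - Multiset.replicate j v = μ.1
    simp
  right_inv m := by
    apply Subtype.ext
    apply Subtype.ext
    show m.1.1 - Multiset.replicate j v + Multiset.replicate j v = m.1.1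
    exact tsub_add_cancel_of_le (Multiset.le_count_iff_replicate_le.mp m.2)

lemma We_add_replicate (s : ℝ) (j : ℕ) (v : ℕ+) (μ : Multiset ℕ+) :
    We s (μ + Multiset.replicate j v) = Xe s v ^ j * We s μ := by
  simp [We, Multiset.prod_replicate, mul_comm]

lemma key (s : ℝ) (r j : ℕ) (hjr : j ≤ r) (v : ℕ+) :
    ∑' m : Sym ℕ+ r, (if j ≤ m.1.count v then We s m.1 else 0)
      = Xe s v ^ j * Te (r - j) s :=
  calc ∑' m : Sym ℕ+ r, (if j ≤ m.1.count v then We s m.1 else 0)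
      = ∑' m : {m : Sym ℕ+ r // j ≤ m.1.count v}, We s m.1.1 := by
        have h := tsum_subtype {m : Sym ℕ+ r | j ≤ m.1.count v} (fun m => We s m.1)
        exact (tsum_congr fun m => by
          simp [Set.indicator_apply, Set.mem_setOf_eq] <;> congr).trans h.symm
    _ = ∑' μ : Sym ℕ+ (r - j), We s ((addRepEquiv r j hjr v) μ).1.1 :=
        (Equiv.tsum_eq (addRepEquiv r j hjr v) _).symm
    _ = ∑' μ : Sym ℕ+ (r - j), Xe s v ^ j * We s μ.1 := by
        exact tsum_congr fun μ => We_add_replicate s j v μ.1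
    _ = Xe s v ^ j * Te (r - j) s := ENNReal.tsum_mul_left

lemma count_mul_eq_sum (r n : ℕ) (hn : n ≤ r) (c : ℝ≥0∞) :
    (n : ℝ≥0∞) * c = ∑ j ∈ Icc 1 r, if j ≤ n then c else 0 := by
  rw [← Finset.sum_filter]
  have h : (Icc 1 r).filter (· ≤ n) = Icc 1 n := by
    ext k; simp only [mem_filter, mem_Icc]; omega
  rw [h, Finset.sum_const, Nat.card_Icc]
  simp [nsmul_eq_mul]

lemma card_mul_We (s : ℝ) (r : ℕ) (m : Sym ℕ+ r) :
    (r : ℝ≥0∞) * We s m.1 = ∑' v : ℕ+, (m.1.count v : ℝ≥0∞) * We s m.1 := by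
  rw [tsum_eq_sum (s := m.1.toFinset)
    (fun v hv => by rw [Multiset.count_eq_zero_of_notMem (by simpa using hv),
      Nat.cast_zero, zero_mul])]
  rw [← Finset.sum_mul]
  congr 1
  rw [← Nat.cast_sum]
  congr 1
  exact (m.1.toFinset_sum_count_eq.trans m.2).symm

/-- The Newton-type recurrence, `ℝ≥0∞` version. -/
lemma main_ennreal (s : ℝ) (r : ℕ) :
    (r : ℝ≥0∞) * Te r s = ∑ j ∈ Icc 1 r, Pe j s * Te (r - j) s :=
  calc (r : ℝ≥0∞) * Te r s
      = ∑' m : Sym ℕ+ r, (r : ℝ≥0∞) * We s m.1 := ENNReal.tsum_mul_left.symm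
    _ = ∑' m : Sym ℕ+ r, ∑' v : ℕ+, (m.1.count v : ℝ≥0∞) * We s m.1 :=
        tsum_congr fun m => card_mul_We s r m
    _ = ∑' v : ℕ+, ∑' m : Sym ℕ+ r, (m.1.count v : ℝ≥0∞) * We s m.1 := ENNReal.tsum_comm
    _ = ∑' v : ℕ+, ∑' m : Sym ℕ+ r, ∑ j ∈ Icc 1 r, (if j ≤ m.1.count v then We s m.1 else 0) :=
        tsum_congr fun v => tsum_congr fun m =>
          count_mul_eq_sum r (m.1.count v) (le_trans (Multiset.count_le_card v m.1) (le_of_eq m.2)) (We s m.1)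
    _ = ∑' v : ℕ+, ∑ j ∈ Icc 1 r, ∑' m : Sym ℕ+ r, (if j ≤ m.1.count v then We s m.1 else 0) :=
        tsum_congr fun v => Summable.tsum_finsetSum fun j _ => ENNReal.summable
    _ = ∑' v : ℕ+, ∑ j ∈ Icc 1 r, Xe s v ^ j * Te (r - j) s :=
        tsum_congr fun v => Finset.sum_congr rfl fun j hj =>
          key s r j (mem_Icc.mp hj).2 v
    _ = ∑ j ∈ Icc 1 r, ∑' v : ℕ+, Xe s v ^ j * Te (r - j) s :=
        Summable.tsum_finsetSum fun j _ => ENNReal.summable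
    _ = ∑ j ∈ Icc 1 r, Pe j s * Te (r - j) s :=
        Finset.sum_congr rfl fun j _ => by rw [Pe, ENNReal.tsum_mul_right]

/-! ### Finiteness -/

lemma one_le_base (s : ℝ) (v : ℕ+) : (1 : ℝ) ≤ ((2 * (v : ℕ) - 1 : ℕ) : ℝ) := by
  have : 1 ≤ 2 * (v : ℕ) - 1 := by have h1 : 1 ≤ (v : ℕ) := v.2; omega
  exact_mod_cast this

lemma Pe_one_ne_top {s : ℝ} (hs : 1 < s) : Pe 1 s ≠ ∞ := by
  have hsum : Summable (fun v : ℕ+ => ((((v : ℕ) : ℝ)) ^ s)⁻¹) := by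
    have h := Real.summable_nat_rpow_inv.mpr hs
    exact h.comp_injective (fun a b h => PNat.coe_injective h)
  have hb : Pe 1 s ≤ ∑' v : ℕ+, ENNReal.ofReal ((((v : ℕ) : ℝ)) ^ s)⁻¹ := by
    refine ENNReal.tsum_le_tsum fun v => ?_
    rw [pow_one, Xe]
    refine ENNReal.ofReal_le_ofReal ?_
    have h1 : (0 : ℝ) < ((v : ℕ) : ℝ) := by exact_mod_cast v.2
    have h2 : (((v : ℕ) : ℝ)) ^ s ≤ ((2 * (v : ℕ) - 1 : ℕ) : ℝ) ^ s := by
      refine Real.rpow_le_rpow h1.le ?_ (by linarith)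
      have : (v : ℕ) ≤ 2 * (v : ℕ) - 1 := by have := v.2; omega
      exact_mod_cast this
    exact inv_anti₀ (Real.rpow_pos_of_pos h1 s) h2
  rw [← ENNReal.ofReal_tsum_of_nonneg (fun v => by positivity) hsum] at hb
  exact ne_top_of_le_ne_top ENNReal.ofReal_ne_top hb

lemma Xe_le_one {s : ℝ} (hs : 0 ≤ s) (v : ℕ+) : Xe s v ≤ 1 := by
  rw [Xe]
  refine ENNReal.ofReal_le_one.mpr ?_
  refine inv_le_one_of_one_le₀ ?_
  exact Real.one_le_rpow (one_le_base s v) hs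

lemma Pe_ne_top {s : ℝ} (hs : 1 < s) {j : ℕ} (hj : 1 ≤ j) : Pe j s ≠ ∞ := by
  refine ne_top_of_le_ne_top (Pe_one_ne_top hs) ?_
  refine ENNReal.tsum_le_tsum fun v => ?_
  calc Xe s v ^ j ≤ Xe s v ^ 1 :=
        pow_le_pow_of_le_one (zero_le) (Xe_le_one (by linarith) v) hj
    _ = Xe s v ^ 1 := rfl

lemma Te_ne_top {s : ℝ} (hs : 1 < s) (r : ℕ) : Te r s ≠ ∞ := by
  induction r with
  | zero =>
    have : Te 0 s = 1 := by
      rw [Te, tsum_eq_single (default : Sym ℕ+ 0)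
        (fun b hb => absurd (Subsingleton.elim b default) hb)]
      rw [We, Multiset.card_eq_zero.mp (default : Sym ℕ+ 0).2]
      simp
    rw [this]; exact ENNReal.one_ne_top
  | succ r ih =>
    have hle : Te (r + 1) s ≤ Pe 1 s * Te r s := by
      rw [Te_eq_tuple, Te_eq_tuple]
      set ι : {f : Fin (r + 1) → ℕ+ // Antitone f} →
          ℕ+ × {f : Fin r → ℕ+ // Antitone f} :=
        fun f => (f.1 0, ⟨fun i => f.1 i.succ,
          fun i j hij => f.2 (Fin.succ_le_succ_iff.mpr hij)⟩) with hι
      have hinj : Function.Injective ι := by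
        intro f g h
        rw [Prod.ext_iff] at h
        obtain ⟨h0, htail⟩ := h
        apply Subtype.ext
        funext i
        induction i using Fin.cases with
        | zero => exact h0
        | succ i => exact congrFun (congrArg Subtype.val htail) i
      have hF : ∀ f : {f : Fin (r + 1) → ℕ+ // Antitone f},
          (fun p : ℕ+ × {f : Fin r → ℕ+ // Antitone f} =>
            Xe s p.1 * ∏ i, Xe s (p.2.1 i)) (ι f) = ∏ i, Xe s (f.1 i) := by
        intro f
        rw [Fin.prod_univ_succ]
      calc (∑' f : {f : Fin (r + 1) → ℕ+ // Antitone f}, ∏ i, Xe s (f.1 i))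
          = ∑' f, (fun p : ℕ+ × {f : Fin r → ℕ+ // Antitone f} =>
              Xe s p.1 * ∏ i, Xe s (p.2.1 i)) (ι f) := (tsum_congr hF).symm
        _ ≤ ∑' p : ℕ+ × {f : Fin r → ℕ+ // Antitone f},
              Xe s p.1 * ∏ i, Xe s (p.2.1 i) :=
            ENNReal.tsum_comp_le_tsum_of_injective hinj _
        _ = Pe 1 s * ∑' f : {f : Fin r → ℕ+ // Antitone f}, ∏ i, Xe s (f.1 i) := by
            rw [ENNReal.tsum_prod']
            simp_rw [ENNReal.tsum_mul_left]
            rw [ENNReal.tsum_mul_right, Pe]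
            simp [pow_one]
    exact ne_top_of_le_ne_top (ENNReal.mul_ne_top (Pe_one_ne_top hs) ih) hle

/-! ### Back to the reals -/

lemma multTStar_eq_toReal (r : ℕ) (s : ℝ) : multTStar r s = (Te r s).toReal := by
  have h : Te r s = ∑' f : {f : Fin r → ℕ+ // Antitone f},
      ENNReal.ofReal (∏ i, (((2 * (f.1 i : ℕ) - 1 : ℕ) : ℝ) ^ s)⁻¹) := by
    rw [Te_eq_tuple]
    refine tsum_congr fun f => ?_
    rw [ENNReal.ofReal_prod_of_nonneg (fun i _ => by positivity)]
    rfl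
  rw [multTStar, h, ENNReal.tsum_toReal_eq (fun f => ENNReal.ofReal_ne_top)]
  exact tsum_congr fun f =>
    (ENNReal.toReal_ofReal (Finset.prod_nonneg fun i _ => by positivity)).symm

lemma rpow_aux (a : ℝ) (ha : 0 ≤ a) (s : ℝ) (j : ℕ) :
    ((a ^ s)⁻¹) ^ j = (a ^ ((j : ℝ) * s))⁻¹ := by
  rw [inv_pow, mul_comm, Real.rpow_mul ha, Real.rpow_natCast]

lemma Xe_pow (s : ℝ) (j : ℕ) (v : ℕ+) :
    Xe s v ^ j = ENNReal.ofReal (((2 * (v : ℕ) - 1 : ℕ) : ℝ) ^ ((j : ℝ) * s))⁻¹ := by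
  rw [Xe, ← ENNReal.ofReal_pow (by positivity),
    rpow_aux _ (le_trans zero_le_one (one_le_base s v)) s j]

lemma tFun_eq_toReal (s : ℝ) (j : ℕ) : tFun ((j : ℝ) * s) = (Pe j s).toReal := by
  have h : Pe j s = ∑' v : ℕ+,
      ENNReal.ofReal (((2 * (v : ℕ) - 1 : ℕ) : ℝ) ^ ((j : ℝ) * s))⁻¹ :=
    tsum_congr fun v => Xe_pow s j v
  rw [tFun, h, ENNReal.tsum_toReal_eq (fun v => ENNReal.ofReal_ne_top)]
  exact tsum_congr fun v => (ENNReal.toReal_ofReal (by positivity)).symm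

end MultTStarAux

/-- For `r ≥ 1` and real `s > 1`:
`r·t_r⋆(s) = ∑_{j=1}^{r} t_{r−j}⋆(s)·t(js)`. -/
theorem multTStar_recurrence (r : ℕ) (hr : 1 ≤ r) (s : ℝ) (hs : 1 < s) :
    (r : ℝ) * multTStar r s =
      ∑ j ∈ Finset.Icc 1 r, multTStar (r - j) s * tFun ((j : ℝ) * s) := by
  open MultTStarAux in
  have h := congrArg ENNReal.toReal (main_ennreal s r)
  rw [ENNReal.toReal_mul, ENNReal.toReal_natCast,
    ENNReal.toReal_sum (fun j hj => ENNReal.mul_ne_top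
      (Pe_ne_top hs (Finset.mem_Icc.mp hj).1) (Te_ne_top hs (r - j)))] at h
  rw [MultTStarAux.multTStar_eq_toReal r s, h]
  refine Finset.sum_congr rfl fun j hj => ?_
  rw [ENNReal.toReal_mul, MultTStarAux.multTStar_eq_toReal (r - j) s,
    MultTStarAux.tFun_eq_toReal s j, mul_comm]
end

section
/- Let r ≥ 1 be an integer and s ∈ ℝ with s > 1. Then ζ_r(s) = ∑ (−1)^{r+c₁+c₂+⋯+c_r} / (1^{c₁} c₁! · 2^{c₂} c₂! ⋯ r^{c_r} c_r!) · ζ(s)^{c₁} ζ(2s)^{c₂} ⋯ ζ(rs)^{c_r}, where the sum runs over all tuples (c₁,…,c_r) of nonnegative integers satisfying c₁ + 2c₂ + ⋯ + r·c_r = r. -/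
/-- The (finite) set of all tuples `(c₁, …, c_r)` of nonnegative integers with
`c₁ + 2c₂ + ⋯ + r·c_r = r`.  (Any such tuple satisfies `cᵢ ≤ r`, so they all lie
in the given pi-Finset.) -/
def weightedTuples (r : ℕ) : Finset (Fin r → ℕ) :=
  (Fintype.piFinset fun _ : Fin r => Finset.range (r + 1)).filter
    fun c => ∑ i : Fin r, (i.val + 1) * c i = r

open Finset

section Algebra
variable {σ : Type*} [Fintype σ] [DecidableEq σ]

/-- elementary symmetric function of the values `y`. -/
noncomputable def Esym (y : σ → ℝ) (k : ℕ) : ℝ :=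
  ∑ t ∈ Finset.powersetCard k (Finset.univ : Finset σ), ∏ i ∈ t, y i

/-- power sum of the values `y`. -/
noncomputable def Pows (y : σ → ℝ) (k : ℕ) : ℝ := ∑ i, y i ^ k

lemma Esym_eq_eval (y : σ → ℝ) (k : ℕ) :
    Esym y k = MvPolynomial.eval y (MvPolynomial.esymm σ ℝ k) := by
  simp [Esym, MvPolynomial.esymm, MvPolynomial.eval_prod]

lemma Pows_eq_eval (y : σ → ℝ) (k : ℕ) :
    Pows y k = MvPolynomial.eval y (MvPolynomial.psum σ ℝ k) := by
  simp [Pows, MvPolynomial.psum]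

lemma neg_one_pow_congr' {a b : ℕ} (h : a % 2 = b % 2) : (-1 : ℝ) ^ a = (-1) ^ b := by
  rcases Nat.even_or_odd a with ha | ha
  · have hb : Even b := by
      rcases ha with ⟨c, hc⟩; exact (Nat.even_iff).2 (by omega)
    rw [ha.neg_one_pow, hb.neg_one_pow]
  · have hb : Odd b := by
      rcases ha with ⟨c, hc⟩; exact (Nat.odd_iff).2 (by omega)
    rw [ha.neg_one_pow, hb.neg_one_pow]

lemma newton_real (y : σ → ℝ) (k : ℕ) (hk : 1 ≤ k) :
    (k : ℝ) * Esym y k =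
      ∑ j ∈ Icc 1 k, (-1 : ℝ) ^ (j + 1) * Pows y j * Esym y (k - j) := by
  have h := congrArg (MvPolynomial.eval y) (MvPolynomial.mul_esymm_eq_sum σ ℝ k)
  simp only [map_mul, map_sum, map_pow, map_neg, map_one, map_natCast] at h
  rw [← Esym_eq_eval] at h
  rw [h, Finset.mul_sum]
  refine Finset.sum_nbij' (fun a => a.2) (fun j => (k - j, j)) ?_ ?_ ?_ ?_ ?_
  · rintro ⟨a, b⟩ hab
    simp only [mem_filter, Finset.HasAntidiagonal.mem_antidiagonal] at hab
    simp only [Finset.mem_Icc]; omega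
  · intro j hj
    simp only [Finset.mem_Icc] at hj
    simp only [mem_filter, Finset.HasAntidiagonal.mem_antidiagonal]; omega
  · rintro ⟨a, b⟩ hab
    simp only [mem_filter, Finset.HasAntidiagonal.mem_antidiagonal] at hab
    exact Prod.ext (by dsimp; omega) rfl
  · intro j hj; rfl
  · rintro ⟨a, b⟩ hab
    simp only [mem_filter, Finset.HasAntidiagonal.mem_antidiagonal] at hab
    rw [← Esym_eq_eval, ← Pows_eq_eval]
    dsimp only
    have ha : a = k - b := by omega
    subst ha
    have h2 : (-1 : ℝ) ^ (k + 1) * (-1) ^ (k - b) = (-1) ^ (b + 1) := by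
      rw [← pow_add]; exact neg_one_pow_congr' (by omega)
    linear_combination Esym y (k - b) * Pows y b * h2

end Algebra


/-- tuples of weight `k` with `M` slots -/
def Tw (M k : ℕ) : Finset (Fin M → ℕ) :=
  (Fintype.piFinset fun _ : Fin M => Finset.range (k + 1)).filter
    fun c => ∑ i : Fin M, (i.val + 1) * c i = k

lemma mem_Tw {M k : ℕ} {c : Fin M → ℕ} :
    c ∈ Tw M k ↔ ∑ i : Fin M, (i.val + 1) * c i = k := by
  simp only [Tw, mem_filter, Fintype.mem_piFinset, Finset.mem_range]
  refine ⟨fun h => h.2, fun h => ⟨fun i => ?_, h⟩⟩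
  have h1 : (i.val + 1) * c i ≤ k := h ▸ Finset.single_le_sum
    (f := fun i : Fin M => (i.val + 1) * c i) (fun _ _ => Nat.zero_le _) (Finset.mem_univ i)
  nlinarith [Nat.succ_le_of_lt i.isLt]

/-- the explicit polynomial expression in the power sums `P` -/
noncomputable def FF (P : ℕ → ℝ) (M k : ℕ) : ℝ :=
  ∑ c ∈ Tw M k,
    (-1 : ℝ) ^ (k + ∑ i, c i) /
        (∏ i : Fin M, ((((i : ℕ) + 1 : ℕ) : ℝ) ^ c i * ((c i).factorial : ℝ))) *
      ∏ i : Fin M, P ((i : ℕ) + 1) ^ c i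

lemma Tw_zero (M : ℕ) : Tw M 0 = {fun _ => 0} := by
  ext c
  simp only [mem_Tw, Finset.mem_singleton, Finset.sum_eq_zero_iff, Finset.mem_univ, true_imp_iff]
  constructor
  · intro h; funext i; have := h i
    simp only [Nat.mul_eq_zero] at this; omega
  · intro h; intro i; simp [h]

lemma FF_zero (P : ℕ → ℝ) (M : ℕ) : FF P M 0 = 1 := by
  simp [FF, Tw_zero]



lemma FF_inner (P : ℕ → ℝ) (M k : ℕ) (i : Fin M) (hik : i.val + 1 ≤ k) :
    ∑ c ∈ Tw M k, (((i.val + 1) * c i : ℕ) : ℝ) *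
        ((-1 : ℝ) ^ (k + ∑ x, c x) /
            (∏ x : Fin M, ((((x : ℕ) + 1 : ℕ) : ℝ) ^ c x * ((c x).factorial : ℝ))) *
          ∏ x : Fin M, P ((x : ℕ) + 1) ^ c x) =
      (-1 : ℝ) ^ (i.val + 2) * P (i.val + 1) * FF P M (k - (i.val + 1)) := by
  classical
  rw [FF, Finset.mul_sum]
  rw [← Finset.sum_filter_of_ne (p := fun c => c i ≠ 0)
    (by intro c hc hterm hci; exact hterm (by simp [hci]))]
  refine Finset.sum_nbij' (fun c => Function.update c i (c i - 1))
    (fun c => Function.update c i (c i + 1)) ?_ ?_ ?_ ?_ ?_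
  · -- membership forward
    intro c hc
    simp only [Finset.mem_filter, mem_Tw] at hc
    obtain ⟨hsum, hne⟩ := hc
    rw [mem_Tw]
    have herase : ∑ x ∈ Finset.univ.erase i, (x.val + 1) * Function.update c i (c i - 1) x
        = ∑ x ∈ Finset.univ.erase i, (x.val + 1) * c x :=
      Finset.sum_congr rfl fun x hx => by
        rw [Function.update_of_ne (Finset.ne_of_mem_erase hx)]
    rw [← Finset.add_sum_erase _ _ (Finset.mem_univ i), herase]
    simp only [Function.update_self]
    rw [← Finset.add_sum_erase _ _ (Finset.mem_univ i)] at hsum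
    have hmul : (i.val + 1) * c i = (i.val + 1) * (c i - 1) + (i.val + 1) := by
      have h1 : 1 ≤ c i := Nat.one_le_iff_ne_zero.2 hne
      cases' Nat.exists_eq_add_of_le h1 with m hm
      rw [hm, Nat.add_sub_cancel_left]; ring
    omega
  · -- membership backward
    intro c hc
    rw [mem_Tw] at hc
    simp only [Finset.mem_filter, mem_Tw]
    have herase : ∑ x ∈ Finset.univ.erase i, (x.val + 1) * Function.update c i (c i + 1) x
        = ∑ x ∈ Finset.univ.erase i, (x.val + 1) * c x :=
      Finset.sum_congr rfl fun x hx => by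
        rw [Function.update_of_ne (Finset.ne_of_mem_erase hx)]
    rw [← Finset.add_sum_erase _ _ (Finset.mem_univ i)] at hc
    constructor
    · rw [← Finset.add_sum_erase _ _ (Finset.mem_univ i), herase]
      simp only [Function.update_self]
      have hmul : (i.val + 1) * (c i + 1) = (i.val + 1) * c i + (i.val + 1) := by ring
      omega
    · simp
  · intro c hc
    funext x
    rcases eq_or_ne x i with rfl | hx
    · simp only [Function.update_self]
      simp only [Finset.mem_filter] at hc
      omega
    · simp [Function.update_of_ne hx]
  · intro c hc
    funext x
    rcases eq_or_ne x i with rfl | hx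
    · simp [Function.update_self]
    · simp [Function.update_of_ne hx]
  · -- value equality
    intro c hc
    simp only [Finset.mem_filter, mem_Tw] at hc
    obtain ⟨hsum, hne⟩ := hc
    obtain ⟨m, hm⟩ : ∃ m, c i = m + 1 := ⟨c i - 1, by omega⟩
    set c' := Function.update c i (c i - 1) with hc'
    have hc'i : c' i = m := by simp [hc', Function.update_self, hm]
    have hc'x : ∀ x ≠ i, c' x = c x := fun x hx => Function.update_of_ne hx _ _
    have hik' : i.val + 1 ≤ ∑ x : Fin M, (x.val + 1) * c x := hsum ▸ hik
    -- sum of c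
    have hS : ∑ x, c x = (∑ x, c' x) + 1 := by
      have h1 : ∑ x ∈ Finset.univ.erase i, c' x = ∑ x ∈ Finset.univ.erase i, c x :=
        Finset.sum_congr rfl fun x hx => hc'x x (Finset.ne_of_mem_erase hx)
      rw [← Finset.add_sum_erase _ c (Finset.mem_univ i),
        ← Finset.add_sum_erase _ c' (Finset.mem_univ i), h1, hc'i, hm]
      omega
    -- denominator product
    have hD : ∏ x : Fin M, ((((x : ℕ) + 1 : ℕ) : ℝ) ^ c x * ((c x).factorial : ℝ))
        = (((i.val + 1) * c i : ℕ) : ℝ) *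
          ∏ x : Fin M, ((((x : ℕ) + 1 : ℕ) : ℝ) ^ c' x * ((c' x).factorial : ℝ)) := by
      have h1 : ∏ x ∈ Finset.univ.erase i, ((((x : ℕ) + 1 : ℕ) : ℝ) ^ c' x * ((c' x).factorial : ℝ))
          = ∏ x ∈ Finset.univ.erase i, ((((x : ℕ) + 1 : ℕ) : ℝ) ^ c x * ((c x).factorial : ℝ)) :=
        Finset.prod_congr rfl fun x hx => by rw [hc'x x (Finset.ne_of_mem_erase hx)]
      rw [← Finset.mul_prod_erase _ _ (Finset.mem_univ i),
        ← Finset.mul_prod_erase Finset.univ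
          (fun x : Fin M => ((((x : ℕ) + 1 : ℕ) : ℝ) ^ c' x * ((c' x).factorial : ℝ)))
          (Finset.mem_univ i), h1, hc'i, hm]
      push_cast [pow_succ, Nat.factorial_succ]
      ring
    -- P product
    have hQ : ∏ x : Fin M, P ((x : ℕ) + 1) ^ c x
        = P (i.val + 1) * ∏ x : Fin M, P ((x : ℕ) + 1) ^ c' x := by
      have h1 : ∏ x ∈ Finset.univ.erase i, P ((x : ℕ) + 1) ^ c' x
          = ∏ x ∈ Finset.univ.erase i, P ((x : ℕ) + 1) ^ c x :=
        Finset.prod_congr rfl fun x hx => by rw [hc'x x (Finset.ne_of_mem_erase hx)]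
      rw [← Finset.mul_prod_erase _ _ (Finset.mem_univ i),
        ← Finset.mul_prod_erase Finset.univ (fun x : Fin M => P ((x : ℕ) + 1) ^ c' x)
          (Finset.mem_univ i), h1, hc'i, hm]
      rw [pow_succ]
      ring
    -- sign
    have hsign : (-1 : ℝ) ^ (k + ∑ x, c x)
        = (-1) ^ (i.val + 2) * (-1) ^ ((k - (i.val + 1)) + ∑ x, c' x) := by
      rw [← pow_add]
      congr 1
      omega
    -- positivity of denominator
    have hD'pos : 0 < ∏ x : Fin M, ((((x : ℕ) + 1 : ℕ) : ℝ) ^ c' x * ((c' x).factorial : ℝ)) :=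
      Finset.prod_pos fun x _ => mul_pos (pow_pos (by positivity) _)
        (by exact_mod_cast (c' x).factorial_pos)
    have hcast : (((i.val + 1) * c i : ℕ) : ℝ) ≠ 0 := by
      rw [hm]; push_cast; positivity
    rw [hD, hQ, hsign]
    field_simp

lemma FF_rec (P : ℕ → ℝ) (M k : ℕ) (hk : 1 ≤ k) (hkM : k ≤ M) :
    (k : ℝ) * FF P M k = ∑ j ∈ Icc 1 k, (-1 : ℝ) ^ (j + 1) * P j * FF P M (k - j) := by
  rw [FF, Finset.mul_sum]
  calc
    ∑ c ∈ Tw M k, (k : ℝ) *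
        ((-1 : ℝ) ^ (k + ∑ x, c x) /
            (∏ x : Fin M, ((((x : ℕ) + 1 : ℕ) : ℝ) ^ c x * ((c x).factorial : ℝ))) *
          ∏ x : Fin M, P ((x : ℕ) + 1) ^ c x)
      = ∑ c ∈ Tw M k, ∑ i : Fin M, (((i.val + 1) * c i : ℕ) : ℝ) *
        ((-1 : ℝ) ^ (k + ∑ x, c x) /
            (∏ x : Fin M, ((((x : ℕ) + 1 : ℕ) : ℝ) ^ c x * ((c x).factorial : ℝ))) *
          ∏ x : Fin M, P ((x : ℕ) + 1) ^ c x) := by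
        refine Finset.sum_congr rfl fun c hc => ?_
        rw [mem_Tw] at hc
        rw [← Finset.sum_mul]
        congr 1
        rw [← hc]
        push_cast
        rfl
    _ = ∑ i : Fin M, ∑ c ∈ Tw M k, (((i.val + 1) * c i : ℕ) : ℝ) *
        ((-1 : ℝ) ^ (k + ∑ x, c x) /
            (∏ x : Fin M, ((((x : ℕ) + 1 : ℕ) : ℝ) ^ c x * ((c x).factorial : ℝ))) *
          ∏ x : Fin M, P ((x : ℕ) + 1) ^ c x) := Finset.sum_comm
    _ = ∑ i ∈ Finset.univ.filter (fun i : Fin M => i.val + 1 ≤ k),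
          ∑ c ∈ Tw M k, (((i.val + 1) * c i : ℕ) : ℝ) *
        ((-1 : ℝ) ^ (k + ∑ x, c x) /
            (∏ x : Fin M, ((((x : ℕ) + 1 : ℕ) : ℝ) ^ c x * ((c x).factorial : ℝ))) *
          ∏ x : Fin M, P ((x : ℕ) + 1) ^ c x) := by
        rw [Finset.sum_filter_of_ne]
        intro i _ hne
        by_contra hik
        apply hne
        refine Finset.sum_eq_zero fun c hc => ?_
        rw [mem_Tw] at hc
        have h1 : (i.val + 1) * c i ≤ k := hc ▸ Finset.single_le_sum
          (f := fun i : Fin M => (i.val + 1) * c i) (fun _ _ => Nat.zero_le _) (Finset.mem_univ i)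
        have h2 : c i = 0 := by nlinarith
        simp [h2]
    _ = ∑ i ∈ Finset.univ.filter (fun i : Fin M => i.val + 1 ≤ k),
          (-1 : ℝ) ^ (i.val + 2) * P (i.val + 1) * FF P M (k - (i.val + 1)) := by
        refine Finset.sum_congr rfl fun i hi => ?_
        simp only [Finset.mem_filter] at hi
        exact FF_inner P M k i hi.2
    _ = ∑ j ∈ Icc 1 k, (-1 : ℝ) ^ (j + 1) * P j * FF P M (k - j) := by
        refine Finset.sum_bij (fun i _ => i.val + 1) ?_ ?_ ?_ ?_
        · intro i hi
          simp only [Finset.mem_filter] at hi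
          simp only [Finset.mem_Icc]
          omega
        · intro a ha b hb hab
          exact Fin.ext (by omega)
        · intro j hj
          simp only [Finset.mem_Icc] at hj
          refine ⟨⟨j - 1, by omega⟩, ?_, show j - 1 + 1 = j by omega⟩
          simp only [Finset.mem_filter]
          exact ⟨Finset.mem_univ _, show j - 1 + 1 ≤ k by omega⟩
        · intro i hi
          rfl

lemma Esym_eq_FF {σ : Type*} [Fintype σ] [DecidableEq σ] (y : σ → ℝ) (M k : ℕ) (hkM : k ≤ M) :
    Esym y k = FF (Pows y) M k := by
  induction k using Nat.strong_induction_on with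
  | _ k IH =>
    rcases Nat.eq_zero_or_pos k with rfl | hk
    · rw [FF_zero]
      simp [Esym]
    · have h1 := newton_real y k hk
      have h2 := FF_rec (Pows y) M k hk hkM
      have h3 : ∑ j ∈ Icc 1 k, (-1 : ℝ) ^ (j + 1) * Pows y j * Esym y (k - j)
          = ∑ j ∈ Icc 1 k, (-1 : ℝ) ^ (j + 1) * Pows y j * FF (Pows y) M (k - j) := by
        refine Finset.sum_congr rfl fun j hj => ?_
        simp only [Finset.mem_Icc] at hj
        rw [IH (k - j) (by omega) (by omega)]
      have hkne : (k : ℝ) ≠ 0 := Nat.cast_ne_zero.2 (by omega)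
      apply mul_left_cancel₀ hkne
      rw [h1, h3, h2]

noncomputable def uu (s : ℝ) (n : ℕ+) : ℝ := (((n : ℕ) : ℝ) ^ s)⁻¹

def pnatRange (N : ℕ) : Finset ℕ+ :=
  (Finset.range N).map ⟨Nat.succPNat, Nat.succPNat_injective⟩

lemma mem_pnatRange {N : ℕ} {n : ℕ+} : n ∈ pnatRange N ↔ (n : ℕ) ≤ N := by
  simp only [pnatRange, Finset.mem_map, Finset.mem_range, Function.Embedding.coeFn_mk]
  constructor
  · rintro ⟨m, hm, rfl⟩
    simp only [Nat.succPNat_coe]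
    omega
  · intro h
    refine ⟨n.natPred, ?_, PNat.succPNat_natPred n⟩
    have h1 : n.natPred + 1 = (n : ℕ) := PNat.natPred_add_one n
    have h2 : 0 < (n : ℕ) := n.2
    omega

lemma pnatRange_mono : Monotone pnatRange := fun a b hab =>
  Finset.map_subset_map.2 (Finset.range_subset_range.2 hab)

instance decStrictAnti (r : ℕ) : DecidablePred fun f : Fin r → ℕ+ => StrictAnti f := fun f =>
  decidable_of_iff (∀ i j : Fin r, i < j → f j < f i)
    ⟨fun h a b hab => h a b hab, fun h i j hij => h hij⟩

/-- strictly antitone tuples with entries at most `N` -/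
def SAT (N r : ℕ) : Finset (Fin r → ℕ+) :=
  (Fintype.piFinset fun _ : Fin r => pnatRange N).filter fun f => StrictAnti f

lemma Esym_eq_SAT (s : ℝ) (N r : ℕ) :
    Esym (fun i : Fin N => uu s i.val.succPNat) r = ∑ f ∈ SAT N r, ∏ i, uu s (f i) := by
  classical
  rw [Esym]
  refine Finset.sum_bij
    (fun t ht => fun i : Fin r =>
      ((t.orderEmbOfFin (Finset.mem_powersetCard_univ.1 ht)) i.rev).val.succPNat) ?_ ?_ ?_ ?_
  · -- maps into SAT
    intro t ht
    simp only [SAT, Finset.mem_filter, Fintype.mem_piFinset]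
    refine ⟨fun i => ?_, fun a b hab => ?_⟩
    · rw [mem_pnatRange]
      simp only [Nat.succPNat_coe]
      exact (t.orderEmbOfFin _ i.rev).isLt
    · simp only
      rw [Nat.succPNat_lt_succPNat]
      exact_mod_cast (t.orderEmbOfFin _).strictMono (Fin.rev_lt_rev.2 hab)
  · -- injective
    intro t ht t' ht' h
    have hc := Finset.mem_powersetCard_univ.1 ht
    have hc' := Finset.mem_powersetCard_univ.1 ht'
    refine Finset.eq_of_subset_of_card_le (fun x hx => ?_) (le_of_eq (by rw [hc, hc']))
    obtain ⟨i, hi⟩ : ∃ i, (t.orderEmbOfFin hc) i = x := by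
      have := Finset.range_orderEmbOfFin t hc
      rw [← Finset.mem_coe, ← this] at hx
      exact hx
    have h2 := congrFun h i.rev
    simp only [Fin.rev_rev] at h2
    have h3 : (t.orderEmbOfFin hc i).val = (t'.orderEmbOfFin hc' i).val :=
      Nat.succPNat_injective h2
    rw [← hi]
    have h4 : t.orderEmbOfFin hc i = t'.orderEmbOfFin hc' i := Fin.ext h3
    rw [h4]
    exact Finset.orderEmbOfFin_mem _ _ _
  · -- surjective
    intro f hf
    simp only [SAT, Finset.mem_filter, Fintype.mem_piFinset] at hf
    obtain ⟨hmem, hanti⟩ := hf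
    have hbound : ∀ i, (f i : ℕ) - 1 < N := by
      intro i
      have h1 : (f i : ℕ) ≤ N := mem_pnatRange.1 (hmem i)
      have h2 : 0 < (f i : ℕ) := (f i).2
      omega
    set g : Fin r → Fin N := fun i => ⟨(f i : ℕ) - 1, hbound i⟩ with hg
    have hginj : Function.Injective g := by
      intro a b hab
      apply hanti.injective
      have h1 : (f a : ℕ) - 1 = (f b : ℕ) - 1 := congrArg Fin.val hab
      have h2 : 0 < (f a : ℕ) := (f a).2
      have h3 : 0 < (f b : ℕ) := (f b).2
      exact PNat.coe_injective (by omega)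
    set t : Finset (Fin N) := Finset.univ.image g with hteq
    have hcard : t.card = r := by
      rw [hteq, Finset.card_image_of_injective _ hginj, Finset.card_univ, Fintype.card_fin]
    refine ⟨t, Finset.mem_powersetCard_univ.2 hcard, ?_⟩
    -- show the enumeration of t equals f
    have hF : (fun j : Fin r => g j.rev) = ⇑(t.orderEmbOfFin hcard) := by
      refine Finset.orderEmbOfFin_unique hcard (fun x => ?_) (fun a b hab => ?_)
      · exact Finset.mem_image_of_mem g (Finset.mem_univ _)
      · have h1 : f (a.rev) < f (b.rev) := hanti (Fin.rev_lt_rev.2 hab)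
        have h2 : 0 < (f a.rev : ℕ) := (f a.rev).2
        have h3 : (f a.rev : ℕ) < (f b.rev : ℕ) := h1
        simp only [hg, Fin.lt_def]
        omega
    funext i
    show ((t.orderEmbOfFin hcard) i.rev).val.succPNat = f i
    have h5 := congrFun hF i.rev
    simp only [Fin.rev_rev] at h5
    rw [← h5]
    apply PNat.coe_injective
    have h6 : 0 < (f i : ℕ) := (f i).2
    simp only [hg, Nat.succPNat_coe]
    omega
  · -- values
    intro t ht
    have hc := Finset.mem_powersetCard_univ.1 ht
    rw [show (∏ i ∈ t, uu s i.val.succPNat)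
        = ∏ i : Fin r, uu s ((t.orderEmbOfFin hc i).val.succPNat) from ?_]
    · exact (Fintype.prod_bijective Fin.rev Fin.rev_involutive.bijective _ _
        fun i => rfl).symm
    · refine (Finset.prod_nbij (fun i => t.orderEmbOfFin hc i) ?_ ?_ ?_ ?_).symm
      · intro i _; exact Finset.orderEmbOfFin_mem _ _ _
      · intro a _ b _ hab
        exact (t.orderEmbOfFin hc).injective hab
      · intro x hx
        have hr := Finset.range_orderEmbOfFin t hc
        have hx' : x ∈ Set.range ⇑(t.orderEmbOfFin hc) := by rw [hr]; exact hx
        obtain ⟨i, hi⟩ := hx'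
        exact ⟨i, by simp, hi⟩
      · intro i _; rfl

lemma uu_nonneg (s : ℝ) (n : ℕ+) : 0 ≤ uu s n := by
  unfold uu; positivity

lemma summable_uu {s : ℝ} (hs : 1 < s) : Summable (uu s) := by
  have h1 : Summable (fun n : ℕ => ((n : ℝ) ^ s)⁻¹) := Real.summable_nat_rpow_inv.2 hs
  have h2 : Summable ((fun n : ℕ => ((n : ℝ) ^ s)⁻¹) ∘ PNat.val) :=
    h1.comp_injective PNat.coe_injective
  have h3 : uu s = (fun n : ℕ => ((n : ℝ) ^ s)⁻¹) ∘ PNat.val := by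
    funext n; rfl
  rw [h3]; exact h2

lemma summable_prodUU {s : ℝ} (hs : 1 < s) (r : ℕ) :
    Summable (fun f : Fin r → ℕ+ => ∏ i, uu s (f i)) := by
  induction r with
  | zero => exact Summable.of_finite
  | succ n IH =>
    have h1 : Summable fun x : ℕ+ × (Fin n → ℕ+) => uu s x.1 * ∏ i, uu s (x.2 i) :=
      Summable.mul_of_nonneg (f := uu s) (g := fun y : Fin n → ℕ+ => ∏ i, uu s (y i))
        (summable_uu hs) IH (fun n => uu_nonneg s n)
        (fun f => Finset.prod_nonneg fun i _ => uu_nonneg s _)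
    have h2 := (Fin.consEquiv fun _ : Fin (n + 1) => ℕ+).symm.summable_iff.2 h1
    have h3 : ((fun x : ℕ+ × (Fin n → ℕ+) => uu s x.1 * ∏ i, uu s (x.2 i)) ∘
        ⇑(Fin.consEquiv fun _ : Fin (n + 1) => ℕ+).symm) = fun f : Fin (n + 1) → ℕ+ => ∏ i, uu s (f i) := by
      funext f
      simp only [Function.comp_apply]
      rw [Fin.prod_univ_succ]
      rfl
    rwa [h3] at h2

lemma hasSum_multZeta (r : ℕ) {s : ℝ} (hs : 1 < s) :
    HasSum (fun f : {f : Fin r → ℕ+ // StrictAnti f} => ∏ i, uu s (f.1 i)) (multZeta r s) := by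
  have h2 : Summable ((fun f : Fin r → ℕ+ => ∏ i, uu s (f i)) ∘
      (Subtype.val : {f : Fin r → ℕ+ // StrictAnti f} → (Fin r → ℕ+))) :=
    (summable_prodUU hs r).comp_injective Subtype.val_injective
  have h1 : Summable fun f : {f : Fin r → ℕ+ // StrictAnti f} => ∏ i, uu s (f.1 i) := h2
  have h3 : multZeta r s = ∑' f : {f : Fin r → ℕ+ // StrictAnti f}, ∏ i, uu s (f.1 i) := rfl
  rw [h3]
  exact h1.hasSum

lemma tendsto_SAT (r : ℕ) {s : ℝ} (hs : 1 < s) :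
    Filter.Tendsto (fun N => ∑ f ∈ SAT N r, ∏ i, uu s (f i)) Filter.atTop
      (nhds (multZeta r s)) := by
  have h := hasSum_multZeta r hs
  have hmono : Monotone (fun N => (Fintype.piFinset fun _ : Fin r => pnatRange N).subtype
      (fun f => StrictAnti f)) := by
    intro a b hab x hx
    rw [Finset.mem_subtype] at hx ⊢
    exact Fintype.piFinset_subset _ _ (fun _ => pnatRange_mono hab) hx
  have hcover : ∀ x : {f : Fin r → ℕ+ // StrictAnti f},
      ∃ N, x ∈ (Fintype.piFinset fun _ : Fin r => pnatRange N).subtype (fun f => StrictAnti f) := by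
    intro x
    refine ⟨Finset.univ.sup fun i => ((x.1 i : ℕ)), ?_⟩
    rw [Finset.mem_subtype, Fintype.mem_piFinset]
    intro i
    rw [mem_pnatRange]
    exact Finset.le_sup (f := fun i => ((x.1 i : ℕ))) (Finset.mem_univ i)
  have htop := Filter.tendsto_atTop_finset_of_monotone hmono hcover
  have h2 := (h.comp htop :)
  have h3 : ∀ N, ∑ a ∈ (Fintype.piFinset fun _ : Fin r => pnatRange N).subtype
      (fun f => StrictAnti f), ∏ i, uu s (a.1 i) = ∑ f ∈ SAT N r, ∏ i, uu s (f i) := by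
    intro N
    exact Finset.sum_subtype_eq_sum_filter (fun g : Fin r → ℕ+ => ∏ i, uu s (g i))
      (p := fun f => StrictAnti f)
  simpa only [Function.comp_def, h3] using h2

lemma tendsto_Pows {s : ℝ} (hs : 1 < s) (j : ℕ) (hj : 1 ≤ j) :
    Filter.Tendsto (fun N => Pows (fun i : Fin N => uu s i.val.succPNat) j) Filter.atTop
      (nhds (riemannZetaReal ((j : ℕ) * s))) := by
  have hjs : 1 < (j : ℝ) * s := by
    have : (1 : ℝ) ≤ (j : ℝ) := by exact_mod_cast hj
    nlinarith
  have hsum : HasSum (uu ((j : ℕ) * s)) (riemannZetaReal ((j : ℕ) * s)) :=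
    (summable_uu hjs).hasSum
  have htop : Filter.Tendsto pnatRange Filter.atTop Filter.atTop := by
    refine Filter.tendsto_atTop_finset_of_monotone pnatRange_mono fun n => ⟨(n : ℕ), ?_⟩
    rw [mem_pnatRange]
  have h2 := (hsum.comp htop :)
  have h3 : ∀ N, ∑ n ∈ pnatRange N, uu ((j : ℕ) * s) n
      = Pows (fun i : Fin N => uu s i.val.succPNat) j := by
    intro N
    rw [pnatRange, Finset.sum_map, Pows]
    simp only [Function.Embedding.coeFn_mk]
    rw [Finset.sum_range (fun m => uu ((j : ℕ) * s) m.succPNat)]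
    refine Finset.sum_congr rfl fun i _ => ?_
    show uu ((j : ℕ) * s) (i.val.succPNat) = (uu s i.val.succPNat) ^ j
    unfold uu
    rw [inv_pow]
    congr 1
    rw [← Real.rpow_natCast (((i.val.succPNat : ℕ) : ℝ) ^ s) j, ← Real.rpow_mul (by positivity),
      mul_comm]
  simpa only [Function.comp_def, h3] using h2

/-- For `r ≥ 1` and real `s > 1`:
`ζ_r(s) = ∑_{c₁+2c₂+⋯+rc_r=r} (−1)^{r+c₁+⋯+c_r}/(1^{c₁}c₁!⋯r^{c_r}c_r!) · ζ(s)^{c₁}⋯ζ(rs)^{c_r}`. -/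
theorem multZeta_explicit (r : ℕ) (hr : 1 ≤ r) (s : ℝ) (hs : 1 < s) :
    multZeta r s =
      ∑ c ∈ weightedTuples r,
        (-1 : ℝ) ^ (r + ∑ i, c i) /
          (∏ i : Fin r, ((((i : ℕ) + 1 : ℕ) : ℝ) ^ c i * ((c i).factorial : ℝ))) *
        ∏ i : Fin r, riemannZetaReal ((((i : ℕ) + 1 : ℕ) : ℝ) * s) ^ c i := by
  classical
  have hA := tendsto_SAT r hs
  have hEq : ∀ N, ∑ f ∈ SAT N r, ∏ i, uu s (f i)
      = FF (Pows fun i : Fin N => uu s i.val.succPNat) r r := fun N => by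
    rw [← Esym_eq_SAT, Esym_eq_FF _ r r le_rfl]
  rw [Filter.tendsto_congr hEq] at hA
  have hTw : Tw r r = weightedTuples r := rfl
  have hB : Filter.Tendsto (fun N => FF (Pows fun i : Fin N => uu s i.val.succPNat) r r)
      Filter.atTop
      (nhds (∑ c ∈ weightedTuples r,
        (-1 : ℝ) ^ (r + ∑ i, c i) /
          (∏ i : Fin r, ((((i : ℕ) + 1 : ℕ) : ℝ) ^ c i * ((c i).factorial : ℝ))) *
        ∏ i : Fin r, riemannZetaReal ((((i : ℕ) + 1 : ℕ) : ℝ) * s) ^ c i)) := by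
    simp only [FF, hTw]
    refine tendsto_finset_sum _ fun c hc => ?_
    exact Filter.Tendsto.const_mul _
      (tendsto_finset_prod _ fun i _ => (tendsto_Pows hs (i.val + 1) (by omega)).pow (c i))
  exact tendsto_nhds_unique hA hB
end

section
/- Let r ≥ 1 be an integer and s ∈ ℝ with s > 1. Then ζ_r⋆(s) = ∑ 1 / (1^{c₁} c₁! · 2^{c₂} c₂! ⋯ r^{c_r} c_r!) · ζ(s)^{c₁} ζ(2s)^{c₂} ⋯ ζ(rs)^{c_r}, where the sum runs over all tuples (c₁,…,c_r) of nonnegative integers satisfying c₁ + 2c₂ + ⋯ + r·c_r = r. -/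
open scoped ENNReal


/-- The multiple zeta-star function at identical arguments:
`ζ_r⋆(s) = ∑_{n₁ ≥ ⋯ ≥ n_r ≥ 1} (n₁ ⋯ n_r)^{-s}`. -/
noncomputable def multZetaStar (r : ℕ) (s : ℝ) : ℝ :=
  ∑' f : {f : Fin r → ℕ+ // Antitone f}, ∏ i, (((f.1 i : ℕ) : ℝ) ^ s)⁻¹

namespace MZS


noncomputable def x (s : ℝ) (m : ℕ+) : ℝ≥0∞ := ENNReal.ofReal (((m : ℕ) : ℝ) ^ s)⁻¹

noncomputable def hE (s : ℝ) (r : ℕ) : ℝ≥0∞ :=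
  ∑' M : {M : Multiset ℕ+ // Multiset.card M = r}, (M.1.map (x s)).prod

noncomputable def pE (s : ℝ) (k : ℕ) : ℝ≥0∞ := ∑' m : ℕ+, x s m ^ k

lemma rev_sort_sorted (M : Multiset ℕ+) :
    ((Multiset.sort M (· ≤ ·)).reverse).Pairwise (· ≥ ·) := by
  have hs' : (Multiset.sort M (· ≤ ·)).Pairwise (· ≤ ·) := Multiset.pairwise_sort _ _
  rw [List.pairwise_reverse]
  exact hs'

noncomputable def sortEquiv (r : ℕ) :
    {f : Fin r → ℕ+ // Antitone f} ≃ {M : Multiset ℕ+ // Multiset.card M = r} where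
  toFun f := ⟨(List.ofFn f.1 : List ℕ+), by simp⟩
  invFun M := ⟨fun i => ((Multiset.sort M.1 (· ≤ ·)).reverse).get
      ⟨i, by simp [M.2, i.2]⟩, by
    intro i j hij
    rcases lt_or_eq_of_le hij with h | h
    · exact (rev_sort_sorted M.1).rel_get_of_lt (by simpa using h)
    · simp [h]⟩
  left_inv f := by
    ext i
    have key : (Multiset.sort (↑(List.ofFn f.1) : Multiset ℕ+) (· ≤ ·)).reverse
        = List.ofFn f.1 := by
      refine (fun hp h1 h2 => List.Perm.eq_of_pairwise' (r := (· ≥ ·)) h1 h2 hp) ?_ ?_ ?_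
      · exact (List.reverse_perm _).trans
          (Quotient.exact (Multiset.sort_eq (↑(List.ofFn f.1) : Multiset ℕ+) (· ≤ ·)))
      · exact rev_sort_sorted _
      · rw [List.pairwise_ofFn]
        intro i j hij
        exact f.2 hij.le
    simp only [List.get_of_eq key, List.get_ofFn]
    rfl
  right_inv M := by
    apply Subtype.ext
    have hlen : (Multiset.sort M.1 (· ≤ ·)).reverse.length = r := by simp [M.2]
    have : List.ofFn (fun i : Fin r => ((Multiset.sort M.1 (· ≤ ·)).reverse).get
        ⟨i, by simp [M.2, i.2]⟩) = (Multiset.sort M.1 (· ≤ ·)).reverse := by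
      apply List.ext_get (by simp [hlen])
      intro n h1 h2
      simp [List.get_ofFn]
    simp only [this]
    calc (↑(Multiset.sort M.1 (· ≤ ·)).reverse : Multiset ℕ+)
        = ↑(Multiset.sort M.1 (· ≤ ·)) := Quot.sound (List.reverse_perm _)
      _ = M.1 := Multiset.sort_eq _ _

lemma hE_eq_antitone (s : ℝ) (r : ℕ) :
    hE s r = ∑' f : {f : Fin r → ℕ+ // Antitone f}, ∏ i, x s (f.1 i) := by
  rw [hE, ← (sortEquiv r).tsum_eq]
  congr 1
  funext f
  show ((↑(List.ofFn f.1) : Multiset ℕ+).map (x s)).prod = _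
  rw [Multiset.map_coe, Multiset.prod_coe, List.map_ofFn, List.prod_ofFn]
  rfl




variable {s : ℝ}

lemma x_ne_top (m : ℕ+) : x s m ≠ ∞ := ENNReal.ofReal_ne_top

lemma term_nonneg (m : ℕ+) : (0:ℝ) ≤ (((m : ℕ) : ℝ) ^ s)⁻¹ :=
  inv_nonneg.mpr (Real.rpow_nonneg (Nat.cast_nonneg _) _)

lemma x_le_one (hs : 1 < s) (m : ℕ+) : x s m ≤ 1 := by
  rw [x, ← ENNReal.ofReal_one]
  apply ENNReal.ofReal_le_ofReal
  rw [inv_le_one_iff₀]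
  right
  apply Real.one_le_rpow
  · exact_mod_cast m.one_le
  · linarith

lemma summable_term (hs : 1 < s) : Summable (fun m : ℕ+ => (((m : ℕ) : ℝ) ^ s)⁻¹) := by
  have h : Summable (fun n : ℕ => ((n : ℝ) ^ s)⁻¹) := Real.summable_nat_rpow_inv.mpr hs
  exact h.comp_injective PNat.coe_injective

lemma pE_one_ne_top (hs : 1 < s) : pE s 1 ≠ ∞ := by
  rw [pE]
  simp only [pow_one, x]
  rw [← ENNReal.ofReal_tsum_of_nonneg term_nonneg (summable_term hs)]
  exact ENNReal.ofReal_ne_top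

lemma pE_ne_top (hs : 1 < s) (k : ℕ) : pE s (k + 1) ≠ ∞ := by
  refine ne_top_of_le_ne_top (pE_one_ne_top hs) (ENNReal.tsum_le_tsum fun m => ?_)
  calc x s m ^ (k + 1) = x s m ^ k * x s m ^ 1 := by rw [← pow_add]
    _ ≤ 1 * x s m ^ 1 := mul_le_mul_left (pow_le_one' (x_le_one hs m) k) _
    _ = x s m ^ 1 := one_mul _

lemma pE_toReal (hs : 1 < s) (k : ℕ) :
    (pE s (k + 1)).toReal = riemannZetaReal (((k : ℕ) + 1 : ℕ) * s) := by
  rw [pE, ENNReal.tsum_toReal_eq (fun m => by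
    exact ENNReal.pow_ne_top ENNReal.ofReal_ne_top), riemannZetaReal]
  refine tsum_congr fun m => ?_
  rw [x, ← ENNReal.ofReal_pow (term_nonneg m),
    ENNReal.toReal_ofReal (by positivity)]
  rw [inv_pow, ← Real.rpow_natCast (((m : ℕ) : ℝ) ^ s) (k+1), ← Real.rpow_mul
      (Nat.cast_nonneg _), mul_comm s]


lemma hE_zero (s : ℝ) : hE s 0 = 1 := by
  rw [hE, tsum_eq_single ⟨0, rfl⟩]
  · simp
  · rintro ⟨M, hM⟩ hne
    exact absurd (Subtype.ext (Multiset.card_eq_zero.mp hM)) hne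

section rec
variable (s : ℝ) (r : ℕ)

-- counting lemma (Step A)
lemma count_step (M : {M : Multiset ℕ+ // Multiset.card M = r + 1}) (C : ℝ≥0∞) :
    ∑' z : ℕ × ℕ+, (if z.1 ≤ r ∧ Multiset.replicate (z.1 + 1) z.2 ≤ M.1 then C else 0)
      = ((r + 1 : ℕ) : ℝ≥0∞) * C := by
  classical
  set F : Finset (ℕ × ℕ+) :=
    ((Finset.range (r + 1)) ×ˢ M.1.toFinset).filter
      (fun z => z.1 + 1 ≤ M.1.count z.2) with hF
  have hmem : ∀ z : ℕ × ℕ+,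
      (z.1 ≤ r ∧ Multiset.replicate (z.1 + 1) z.2 ≤ M.1) ↔ z ∈ F := by
    rintro ⟨k, m⟩
    simp only [hF, Finset.mem_filter, Finset.mem_product, Finset.mem_range,
      Multiset.mem_toFinset, ← Multiset.le_count_iff_replicate_le]
    constructor
    · rintro ⟨hk, hc⟩
      exact ⟨⟨Nat.lt_succ_of_le hk, Multiset.count_pos.mp (lt_of_lt_of_le (Nat.succ_pos k) hc)⟩, hc⟩
    · rintro ⟨⟨hk, _⟩, hc⟩
      exact ⟨Nat.lt_succ_iff.mp hk, hc⟩
  have hcard : F.card = r + 1 := by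
    rw [hF, Finset.card_filter, Finset.sum_product]
    rw [Finset.sum_comm]
    have inner : ∀ m ∈ M.1.toFinset,
        (∑ k ∈ Finset.range (r + 1), if k + 1 ≤ M.1.count m then 1 else 0) = M.1.count m := by
      intro m _
      rw [← Finset.card_filter]
      have : (Finset.range (r + 1)).filter (fun k => k + 1 ≤ M.1.count m)
          = Finset.range (M.1.count m) := by
        ext k
        simp only [Finset.mem_filter, Finset.mem_range]
        constructor
        · rintro ⟨_, h2⟩; omega
        · intro h
          have hle : M.1.count m ≤ r + 1 := by
            have h' := Multiset.count_le_card m M.1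
            rw [M.2] at h'
            exact h'
          omega
      rw [this, Finset.card_range]
    rw [Finset.sum_congr rfl inner, Multiset.toFinset_sum_count_eq, M.2]
  have hsupp : ∀ z ∉ F,
      (if z.1 ≤ r ∧ Multiset.replicate (z.1 + 1) z.2 ≤ M.1 then C else 0) = 0 := by
    intro z hz
    rw [if_neg (fun h => hz ((hmem z).mp h))]
  rw [tsum_eq_sum hsupp]
  have : ∀ z ∈ F, (if z.1 ≤ r ∧ Multiset.replicate (z.1 + 1) z.2 ≤ M.1 then C else 0) = C := by
    intro z hz
    rw [if_pos ((hmem z).mpr hz)]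
  rw [Finset.sum_congr rfl this, Finset.sum_const, hcard, nsmul_eq_mul]


def insertEquiv (k : ℕ) (hk : k ≤ r) (m : ℕ+) :
    {M' : Multiset ℕ+ // Multiset.card M' = r - k} ≃
      {M : {M : Multiset ℕ+ // Multiset.card M = r + 1} //
        Multiset.replicate (k + 1) m ≤ M.1} where
  toFun M' := ⟨⟨M'.1 + Multiset.replicate (k + 1) m, by
      simp [M'.2, Multiset.card_replicate]; omega⟩, by
    show Multiset.replicate (k + 1) m ≤ _
    exact Multiset.le_add_left _ _⟩
  invFun M := ⟨M.1.1 - Multiset.replicate (k + 1) m, by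
    rw [Multiset.card_sub M.2, M.1.2, Multiset.card_replicate]; omega⟩
  left_inv M' := by
    apply Subtype.ext
    simp
  right_inv M := by
    apply Subtype.ext
    apply Subtype.ext
    simpa using tsub_add_cancel_of_le M.2

-- per (k, m) slice (Step C)
lemma slice_step (k : ℕ) (hk : k ≤ r) (m : ℕ+) :
    ∑' M : {M : Multiset ℕ+ // Multiset.card M = r + 1},
      (if Multiset.replicate (k + 1) m ≤ M.1 then (M.1.map (x s)).prod else 0)
      = x s m ^ (k + 1) * hE s (r - k) := by
  classical
  set T := {M : Multiset ℕ+ // Multiset.card M = r + 1}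
  set G : T → ℝ≥0∞ := fun M => (M.1.map (x s)).prod with hG
  have h1 : ∀ M : T, (if Multiset.replicate (k + 1) m ≤ M.1 then G M else 0)
      = Set.indicator {M : T | Multiset.replicate (k + 1) m ≤ M.1} G M := by
    intro M
    rw [Set.indicator_apply]
    rfl
  rw [tsum_congr h1, ← tsum_subtype]
  calc (∑' (z : ↥{M : T | Multiset.replicate (k + 1) m ≤ M.1}), G z.1)
      = ∑' M' : {M' : Multiset ℕ+ // Multiset.card M' = r - k},
          G ((insertEquiv r k hk m) M').1 := ((insertEquiv r k hk m).tsum_eq _).symm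
    _ = ∑' M' : {M' : Multiset ℕ+ // Multiset.card M' = r - k},
          x s m ^ (k + 1) * (M'.1.map (x s)).prod := by
        refine tsum_congr fun M' => ?_
        show ((M'.1 + Multiset.replicate (k + 1) m).map (x s)).prod = _
        rw [Multiset.map_add, Multiset.prod_add, Multiset.map_replicate,
          Multiset.prod_replicate]
        ring
    _ = x s m ^ (k + 1) * hE s (r - k) := by rw [ENNReal.tsum_mul_left]; rfl

lemma hE_rec : ((r + 1 : ℕ) : ℝ≥0∞) * hE s (r + 1)
    = ∑ k ∈ Finset.range (r + 1), pE s (k + 1) * hE s (r - k) := by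
  classical
  rw [hE, ← ENNReal.tsum_mul_left]
  have h1 : ∀ M : {M : Multiset ℕ+ // Multiset.card M = r + 1},
      ((r + 1 : ℕ) : ℝ≥0∞) * (M.1.map (x s)).prod
      = ∑' z : ℕ × ℕ+, (if z.1 ≤ r ∧ Multiset.replicate (z.1 + 1) z.2 ≤ M.1
          then (M.1.map (x s)).prod else 0) := fun M => (count_step r M _).symm
  rw [tsum_congr h1, ENNReal.tsum_comm]
  rw [ENNReal.tsum_prod']
  have h2 : ∀ k : ℕ, ∀ m : ℕ+,
      (∑' M : {M : Multiset ℕ+ // Multiset.card M = r + 1},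
        (if k ≤ r ∧ Multiset.replicate (k + 1) m ≤ M.1 then (M.1.map (x s)).prod else 0))
      = if k ≤ r then
          (∑' M : {M : Multiset ℕ+ // Multiset.card M = r + 1},
            (if Multiset.replicate (k + 1) m ≤ M.1 then (M.1.map (x s)).prod else 0)) else 0 := by
    intro k m
    by_cases hk : k ≤ r
    · rw [if_pos hk]
      exact tsum_congr fun M => by simp [hk]; congr
    · rw [if_neg hk]
      simp [hk]
  have h3 : ∀ k : ℕ, (∑' m : ℕ+, ∑' M : {M : Multiset ℕ+ // Multiset.card M = r + 1},
        (if k ≤ r ∧ Multiset.replicate (k + 1) m ≤ M.1 then (M.1.map (x s)).prod else 0))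
      = if k ≤ r then pE s (k + 1) * hE s (r - k) else 0 := by
    intro k
    by_cases hk : k ≤ r
    · rw [if_pos hk]
      calc _ = ∑' m : ℕ+, ∑' M : {M : Multiset ℕ+ // Multiset.card M = r + 1},
            (if Multiset.replicate (k + 1) m ≤ M.1 then (M.1.map (x s)).prod else 0) :=
            tsum_congr fun m => (h2 k m).trans (if_pos hk)
        _ = ∑' m : ℕ+, x s m ^ (k + 1) * hE s (r - k) :=
            tsum_congr fun m => slice_step s r k hk m
        _ = pE s (k + 1) * hE s (r - k) := by rw [ENNReal.tsum_mul_right]; rfl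
    · simp only [h2, if_neg hk]
      simp
  rw [tsum_congr h3]
  rw [tsum_eq_sum (s := Finset.range (r + 1)) (by
    intro k hk
    rw [if_neg (by simpa using hk)])]
  exact Finset.sum_congr rfl fun k hk => by rw [if_pos (Nat.lt_succ_iff.mp (Finset.mem_range.mp hk))]

end rec

def Wg (n m : ℕ) : Finset (Fin n → ℕ) :=
  (Fintype.piFinset fun _ : Fin n => Finset.range (n + 1)).filter
    fun c => ∑ i : Fin n, (i.val + 1) * c i = m

noncomputable def wt (n : ℕ) (c : Fin n → ℕ) : ℝ :=
  (∏ i : Fin n, ((((i : ℕ) + 1 : ℕ) : ℝ) ^ c i * ((c i).factorial : ℝ)))⁻¹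

noncomputable def pq (q : ℕ → ℝ) (n : ℕ) (c : Fin n → ℕ) : ℝ :=
  ∏ i : Fin n, q ((i : ℕ) + 1) ^ c i

noncomputable def Bg (q : ℕ → ℝ) (n m : ℕ) : ℝ :=
  ∑ c ∈ Wg n m, wt n c * pq q n c

lemma mem_Wg {n m : ℕ} (h : m ≤ n) {c : Fin n → ℕ} :
    c ∈ Wg n m ↔ ∑ i : Fin n, (i.val + 1) * c i = m := by
  rw [Wg, Finset.mem_filter]
  constructor
  · exact fun hc => hc.2
  · intro hc
    refine ⟨Fintype.mem_piFinset.mpr fun i => Finset.mem_range.mpr ?_, hc⟩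
    have h1 : (i.val + 1) * c i ≤ m := hc ▸ Finset.single_le_sum
      (f := fun i : Fin n => (i.val + 1) * c i) (fun _ _ => Nat.zero_le _) (Finset.mem_univ i)
    have h2 : c i ≤ (i.val + 1) * c i := Nat.le_mul_of_pos_left _ (Nat.succ_pos _)
    omega

lemma support_Wg {n m : ℕ} {c : Fin n → ℕ} (hc : c ∈ Wg n m) (i : Fin n)
    (hi : m ≤ (i : ℕ)) : c i = 0 := by
  have hsum : ∑ j : Fin n, (j.val + 1) * c j = m := (Finset.mem_filter.mp hc).2
  have h1 : (i.val + 1) * c i ≤ m := hsum ▸ Finset.single_le_sum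
    (f := fun j : Fin n => (j.val + 1) * c j) (fun _ _ => Nat.zero_le _) (Finset.mem_univ i)
  by_contra h
  have : i.val + 1 ≤ (i.val + 1) * c i := Nat.le_mul_of_pos_right _ (Nat.pos_of_ne_zero h)
  omega

lemma prod_restrict {M : Type*} [CommMonoid M] {n m : ℕ} (h : m ≤ n) (F : Fin n → M)
    (hF : ∀ i : Fin n, m ≤ (i : ℕ) → F i = 1) :
    ∏ i : Fin n, F i = ∏ j : Fin m, F (Fin.castLE h j) := by
  have h2 : ∏ i ∈ Finset.univ.map (Fin.castLEEmb h), F i = ∏ j : Fin m, F (Fin.castLE h j) := by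
    rw [Finset.prod_map]
    rfl
  rw [← h2]
  apply (Finset.prod_subset (Finset.subset_univ _) _).symm
  intro i _ hi
  apply hF
  by_contra hlt
  push_neg at hlt
  exact hi (Finset.mem_map.mpr ⟨⟨i.val, hlt⟩, Finset.mem_univ _, Fin.ext rfl⟩)

lemma sum_restrict {M : Type*} [AddCommMonoid M] {n m : ℕ} (h : m ≤ n) (F : Fin n → M)
    (hF : ∀ i : Fin n, m ≤ (i : ℕ) → F i = 0) :
    ∑ i : Fin n, F i = ∑ j : Fin m, F (Fin.castLE h j) := by
  have h2 : ∑ i ∈ Finset.univ.map (Fin.castLEEmb h), F i = ∑ j : Fin m, F (Fin.castLE h j) := by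
    rw [Finset.sum_map]
    rfl
  rw [← h2]
  apply (Finset.sum_subset (Finset.subset_univ _) _).symm
  intro i _ hi
  apply hF
  by_contra hlt
  push_neg at hlt
  exact hi (Finset.mem_map.mpr ⟨⟨i.val, hlt⟩, Finset.mem_univ _, Fin.ext rfl⟩)

lemma Bg_stable (q : ℕ → ℝ) {n m : ℕ} (h : m ≤ n) : Bg q n m = Bg q m m := by
  rw [Bg, Bg]
  refine Finset.sum_nbij' (i := fun c => fun j : Fin m => c (Fin.castLE h j))
    (j := fun d => fun i : Fin n => if hi : (i : ℕ) < m then d ⟨i, hi⟩ else 0)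
    ?_ ?_ ?_ ?_ ?_
  · intro c hc
    rw [mem_Wg le_rfl]
    exact (sum_restrict h (fun i => (i.val + 1) * c i) (fun i hi => by
      rw [support_Wg hc i hi, mul_zero])).symm.trans ((mem_Wg h).mp hc)
  · intro d hd
    rw [mem_Wg h]
    rw [sum_restrict h _ (fun i hi => by
      rw [dif_neg (by omega), mul_zero])]
    simp only [Fin.coe_castLE]
    rw [Finset.sum_congr rfl (fun j (_ : j ∈ Finset.univ) => by
      rw [dif_pos j.2])]
    exact (mem_Wg le_rfl).mp hd
  · intro c hc
    funext i
    dsimp only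
    by_cases hi : (i : ℕ) < m
    · rw [dif_pos hi]
      exact congrArg c (Fin.ext rfl)
    · rw [dif_neg hi, support_Wg hc i (by omega)]
  · intro d hd
    funext j
    simp only [Fin.coe_castLE]
    rw [dif_pos j.2]
  · intro c hc
    have hw : wt n c = wt m (fun j => c (Fin.castLE h j)) := by
      rw [wt, wt]
      rw [prod_restrict h (F := fun i => ((((i : ℕ) + 1 : ℕ) : ℝ) ^ c i *
        ((c i).factorial : ℝ))) (fun i hi => by
          rw [support_Wg hc i hi]
          simp)]
      simp only [Fin.coe_castLE]
    have hp : pq q n c = pq q m (fun j => c (Fin.castLE h j)) := by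
      rw [pq, pq]
      rw [prod_restrict h (F := fun i => q ((i : ℕ) + 1) ^ c i) (fun i hi => by
        rw [support_Wg hc i hi]
        simp)]
      simp only [Fin.coe_castLE]
    rw [hw, hp]

lemma Bg_zero (q : ℕ → ℝ) : Bg q 0 0 = 1 := by
  have huniv : Wg 0 0 = Finset.univ := by
    ext c
    simp only [Finset.mem_univ, iff_true, mem_Wg le_rfl]
    rfl
  rw [Bg, huniv]
  rw [Finset.univ_unique, Finset.sum_singleton]
  simp [wt, pq]


lemma sum_update (n : ℕ) (c : Fin n → ℕ) (i : Fin n) (a : ℕ) :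
    ∑ j : Fin n, (j.val + 1) * Function.update c i a j
      = (∑ j ∈ Finset.univ.erase i, (j.val + 1) * c j) + (i.val + 1) * a := by
  rw [← Finset.sum_erase_add Finset.univ _ (Finset.mem_univ i)]
  congr 1
  · refine Finset.sum_congr rfl fun j hj => ?_
    rw [Function.update_of_ne (Finset.ne_of_mem_erase hj)]
  · rw [Function.update_self]

lemma sum_split (n : ℕ) (c : Fin n → ℕ) (i : Fin n) :
    ∑ j : Fin n, (j.val + 1) * c j
      = (∑ j ∈ Finset.univ.erase i, (j.val + 1) * c j) + (i.val + 1) * c i :=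
  (Finset.sum_erase_add Finset.univ _ (Finset.mem_univ i)).symm

lemma coeff_key (i t : ℕ) :
    ((((i + 1) * (t + 1) : ℕ)) : ℝ) * (((i + 1 : ℕ) : ℝ) ^ (t + 1) * (((t + 1).factorial : ℕ) : ℝ))⁻¹
      = (((i + 1 : ℕ) : ℝ) ^ t * ((t.factorial : ℕ) : ℝ))⁻¹ := by
  have hx : ((i + 1 : ℕ) : ℝ) ≠ 0 := Nat.cast_ne_zero.mpr (Nat.succ_ne_zero _)
  have hxp : ((i + 1 : ℕ) : ℝ) ^ t ≠ 0 := pow_ne_zero _ hx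
  have hf : ((t.factorial : ℕ) : ℝ) ≠ 0 := Nat.cast_ne_zero.mpr t.factorial_ne_zero
  have ht1 : ((t : ℝ) + 1) ≠ 0 := by positivity
  rw [pow_succ, Nat.factorial_succ]
  push_cast
  field_simp

lemma Bg_inner (q : ℕ → ℝ) (n : ℕ) (i : Fin n) :
    ∑ c ∈ Wg n n, (((i.val + 1) * c i : ℕ) : ℝ) * (wt n c * pq q n c)
      = q (i.val + 1) * Bg q n (n - (i.val + 1)) := by
  classical
  rw [Bg, Finset.mul_sum]
  rw [← Finset.sum_filter_of_ne (p := fun c => c i ≠ 0) (fun c _ hfc => by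
    intro hci
    apply hfc
    rw [hci, Nat.mul_zero, Nat.cast_zero, zero_mul])]
  refine Finset.sum_nbij' (i := fun c => Function.update c i (c i - 1))
    (j := fun d => Function.update d i (d i + 1)) ?_ ?_ ?_ ?_ ?_
  · intro c hc
    obtain ⟨hc1, hc2⟩ := Finset.mem_filter.mp hc
    have hsum := (mem_Wg le_rfl).mp hc1
    obtain ⟨t, ht⟩ := Nat.exists_eq_succ_of_ne_zero hc2
    rw [mem_Wg (Nat.sub_le _ _), sum_update]
    rw [sum_split n c i] at hsum
    rw [ht] at hsum ⊢
    rw [Nat.succ_sub_one, Nat.mul_succ] at *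
    have hin : i.val + 1 ≤ n := i.2
    omega
  · intro d hd
    have hsum := (mem_Wg (Nat.sub_le _ _)).mp hd
    rw [Finset.mem_filter]
    constructor
    · rw [mem_Wg le_rfl, sum_update]
      rw [sum_split n d i] at hsum
      rw [Nat.mul_succ]
      have hin : i.val + 1 ≤ n := i.2
      omega
    · rw [Function.update_self]
      omega
  · intro c hc
    obtain ⟨_, hc2⟩ := Finset.mem_filter.mp hc
    funext j
    by_cases hj : j = i
    · subst hj
      rw [Function.update_self, Function.update_self]
      omega
    · rw [Function.update_of_ne hj, Function.update_of_ne hj]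
  · intro d hd
    funext j
    by_cases hj : j = i
    · subst hj
      rw [Function.update_self, Function.update_self]
      omega
    · rw [Function.update_of_ne hj, Function.update_of_ne hj]
  · intro c hc
    obtain ⟨_, hc2⟩ := Finset.mem_filter.mp hc
    obtain ⟨t, ht⟩ := Nat.exists_eq_succ_of_ne_zero hc2
    rw [Nat.succ_eq_add_one] at ht
    set d := Function.update c i (c i - 1) with hd
    have hdi : d i = t := by
      rw [hd, Function.update_self, ht]
      omega
    -- split the products at i
    have hwc : wt n c = ((∏ j ∈ Finset.univ.erase i,
        ((((j : ℕ) + 1 : ℕ) : ℝ) ^ c j * ((c j).factorial : ℝ)))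
        * ((((i : ℕ) + 1 : ℕ) : ℝ) ^ c i * ((c i).factorial : ℝ)))⁻¹ := by
      rw [wt, Finset.prod_erase_mul Finset.univ _ (Finset.mem_univ i)]
    have hwd : wt n d = ((∏ j ∈ Finset.univ.erase i,
        ((((j : ℕ) + 1 : ℕ) : ℝ) ^ c j * ((c j).factorial : ℝ)))
        * ((((i : ℕ) + 1 : ℕ) : ℝ) ^ t * ((t.factorial : ℕ) : ℝ)))⁻¹ := by
      rw [wt, ← Finset.prod_erase_mul Finset.univ _ (Finset.mem_univ i)]
      congr 2
      · refine Finset.prod_congr rfl fun j hj => ?_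
        rw [hd, Function.update_of_ne (Finset.ne_of_mem_erase hj)]
      · rw [hdi]
    have hpc : pq q n c = (∏ j ∈ Finset.univ.erase i, q ((j : ℕ) + 1) ^ c j)
        * q ((i : ℕ) + 1) ^ c i := by
      rw [pq, Finset.prod_erase_mul Finset.univ _ (Finset.mem_univ i)]
    have hpd : pq q n d = (∏ j ∈ Finset.univ.erase i, q ((j : ℕ) + 1) ^ c j)
        * q ((i : ℕ) + 1) ^ t := by
      rw [pq, ← Finset.prod_erase_mul Finset.univ _ (Finset.mem_univ i)]
      congr 1
      · refine Finset.prod_congr rfl fun j hj => ?_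
        rw [hd, Function.update_of_ne (Finset.ne_of_mem_erase hj)]
      · rw [hdi]
    rw [hwc, hwd, hpc, hpd, ht]
    rw [mul_inv, mul_inv, pow_succ (q ((i : ℕ) + 1)) t]
    have hk := coeff_key (i : ℕ) t
    linear_combination ((∏ j ∈ Finset.univ.erase i,
        ((((j : ℕ) + 1 : ℕ) : ℝ) ^ c j * ((c j).factorial : ℝ)))⁻¹
      * (∏ j ∈ Finset.univ.erase i, q ((j : ℕ) + 1) ^ c j)
      * q ((i : ℕ) + 1) ^ t * q ((i : ℕ) + 1)) * hk

lemma Bg_rec (q : ℕ → ℝ) (r : ℕ) :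
    ((r + 1 : ℕ) : ℝ) * Bg q (r + 1) (r + 1)
      = ∑ k ∈ Finset.range (r + 1), q (k + 1) * Bg q (r + 1) (r - k) := by
  rw [Bg, Finset.mul_sum]
  rw [Finset.sum_congr rfl (fun c hc => show ((r + 1 : ℕ) : ℝ) * (wt _ c * pq q _ c)
      = ∑ i : Fin (r + 1), (((i.val + 1) * c i : ℕ) : ℝ) * (wt _ c * pq q _ c) by
    rw [← Finset.sum_mul, ← Nat.cast_sum, (mem_Wg le_rfl).mp hc])]
  rw [Finset.sum_comm]
  rw [Finset.sum_congr rfl (fun i _ => Bg_inner q (r + 1) i)]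
  rw [← Fin.sum_univ_eq_sum_range (fun k => q (k + 1) * Bg q (r + 1) (r - k)) (r + 1)]
  refine Finset.sum_congr rfl fun i _ => ?_
  rw [Nat.succ_sub_succ]



lemma hE_ne_top (hs : 1 < s) : ∀ r : ℕ, hE s r ≠ ∞ := by
  intro r
  induction r using Nat.strong_induction_on with
  | _ r ih =>
    cases r with
    | zero =>
      rw [hE_zero]
      exact ENNReal.one_ne_top
    | succ r' =>
      have hrec := hE_rec s r'
      have hfin : (∑ k ∈ Finset.range (r' + 1), pE s (k + 1) * hE s (r' - k)) ≠ ∞ := by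
        refine ENNReal.sum_ne_top.mpr fun k hk => ENNReal.mul_ne_top (pE_ne_top hs k) ?_
        exact ih (r' - k) (by omega)
      intro h
      rw [h, ENNReal.mul_top (by exact_mod_cast Nat.succ_ne_zero r')] at hrec
      exact hfin hrec.symm

lemma mzs_eq (s : ℝ) (r : ℕ) : multZetaStar r s = (hE s r).toReal := by
  rw [multZetaStar, hE_eq_antitone,
    ENNReal.tsum_toReal_eq (fun f => by
      exact (ENNReal.prod_lt_top (fun i _ => (x_ne_top (f.1 i)).lt_top)).ne)]
  refine tsum_congr fun f => ?_
  rw [ENNReal.toReal_prod]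
  refine Finset.prod_congr rfl fun i _ => ?_
  rw [x, ENNReal.toReal_ofReal (term_nonneg _)]

lemma ZR_rec (hs : 1 < s) (r : ℕ) :
    ((r + 1 : ℕ) : ℝ) * (hE s (r + 1)).toReal
      = ∑ k ∈ Finset.range (r + 1), (pE s (k + 1)).toReal * (hE s (r - k)).toReal := by
  have h := congrArg ENNReal.toReal (hE_rec s r)
  rw [ENNReal.toReal_mul] at h
  simp only [ENNReal.toReal_natCast] at h
  rw [ENNReal.toReal_sum (fun k hk =>
    ENNReal.mul_ne_top (pE_ne_top hs k) (hE_ne_top hs _))] at h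
  rw [h]
  exact Finset.sum_congr rfl fun k _ => ENNReal.toReal_mul

lemma main_eq (hs : 1 < s) : ∀ r : ℕ,
    (hE s r).toReal = Bg (fun k => riemannZetaReal ((k : ℝ) * s)) r r := by
  intro r
  induction r using Nat.strong_induction_on with
  | _ r ih =>
    cases r with
    | zero =>
      rw [hE_zero, Bg_zero]
      simp
    | succ r' =>
      have h1 := ZR_rec hs r'
      have h2 := Bg_rec (fun k => riemannZetaReal ((k : ℝ) * s)) r'
      have h3 : ∀ k ∈ Finset.range (r' + 1),
          (pE s (k + 1)).toReal * (hE s (r' - k)).toReal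
          = riemannZetaReal (((k : ℝ) + 1) * s) *
              Bg (fun k => riemannZetaReal ((k : ℝ) * s)) (r' + 1) (r' - k) := by
        intro k hk
        rw [pE_toReal hs k, ih (r' - k) (by omega),
          Bg_stable _ (show r' - k ≤ r' + 1 by omega)]
        push_cast
        ring
      rw [Finset.sum_congr rfl h3] at h1
      push_cast at h1 h2
      have hne : ((r' : ℝ) + 1) ≠ 0 := by positivity
      exact mul_left_cancel₀ hne (h1.trans h2.symm)

end MZS

/-- For `r ≥ 1` and real `s > 1`:
`ζ_r⋆(s) = ∑_{c₁+2c₂+⋯+rc_r=r} 1/(1^{c₁}c₁!⋯r^{c_r}c_r!) · ζ(s)^{c₁}⋯ζ(rs)^{c_r}`. -/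
theorem multZetaStar_explicit (r : ℕ) (hr : 1 ≤ r) (s : ℝ) (hs : 1 < s) :
    multZetaStar r s =
      ∑ c ∈ weightedTuples r,
        1 / (∏ i : Fin r, ((((i : ℕ) + 1 : ℕ) : ℝ) ^ c i * ((c i).factorial : ℝ))) *
        ∏ i : Fin r, riemannZetaReal ((((i : ℕ) + 1 : ℕ) : ℝ) * s) ^ c i := by
  have hq := MZS.main_eq hs r
  rw [MZS.mzs_eq s r] at *
  rw [hq]
  rw [MZS.Bg]
  refine Finset.sum_congr rfl fun c hc => ?_
  rw [MZS.wt, MZS.pq, one_div]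
end
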